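/- arXiv:1801.03483 — 16 statements merged into one kernel-verified Lean document; each statement's English description precedes it below -/
import Mathlib

section
/- In an abstract represented-problem setup over X, the decision procedure P is rationalizable by choice function — i.e. there exists a linear order on X such that for every a : T, P(a) is the maximum of the nonempty finite set ⟦a⟧ with respect to that order — if and only if P is extensional (EXT) and satisfies α-extended (αE). -/
/-- In an abstract represented-problem setup over `X`, the decision
procedure `P` is rationalizable by choice function (there is a linear order on `X`
such that `P a` is always the maximum of `⟦a⟧`) iff `P` is extensional and
satisfies α-extended. -/
theorem stmt_1 {X T : Type*} (ext : T → Finset X)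
    (hne : ∀ a : T, (ext a).Nonempty)
    (P : T → X) (hP : ∀ a : T, P a ∈ ext a)
    (r : (A : Finset X) → A.Nonempty → T)
    (hr : ∀ (A : Finset X) (hA : A.Nonempty), ext (r A hA) = A) :
    (∃ L : LinearOrder X, ∀ a : T, P a = @Finset.max' X L (ext a) (hne a)) ↔
      ((∀ a b : T, ext a = ext b → P a = P b) ∧
        (∀ (a : T) (B : Finset X), B.Nonempty → P a ∈ B → B ⊆ ext a →
          ∃ b : T, ext b = B ∧ P b = P a)) := by
  classical
  constructor
  · rintro ⟨L, hL⟩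
    constructor
    · intro a b h
      rw [hL a, hL b]
      congr 1
    · intro a B hB hPB hBsub
      refine ⟨r B hB, hr B hB, ?_⟩
      rw [hL (r B hB), hL a]
      apply @le_antisymm X L.toPartialOrder
      · apply Finset.max'_le
        intro y hy
        rw [hr] at hy
        exact Finset.le_max' _ y (hBsub hy)
      · apply Finset.le_max'
        rw [hr]
        rw [hL a] at hPB
        exact hPB
  · rintro ⟨hEXT, hαE⟩
    -- choice function
    set c : (A : Finset X) → A.Nonempty → X := fun A hA => P (r A hA) with hc
    have hcmem : ∀ (A : Finset X) (hA : A.Nonempty), c A hA ∈ A := by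
      intro A hA
      have := hP (r A hA)
      rwa [hr] at this
    have hcon : ∀ (A : Finset X) (hA : A.Nonempty) (B : Finset X) (hB : B.Nonempty),
        B ⊆ A → c A hA ∈ B → c B hB = c A hA := by
      intro A hA B hB hsub hmem
      obtain ⟨b, hb1, hb2⟩ := hαE (r A hA) B hB hmem (by rw [hr]; exact hsub)
      have : P (r B hB) = P b := hEXT _ _ (by rw [hr, hb1])
      simpa [hc, this] using hb2
    have pairne : ∀ x y : X, ({x, y} : Finset X).Nonempty := fun x y =>
      ⟨x, Finset.mem_insert_self _ _⟩
    have hcext : ∀ (A : Finset X) (hA : A.Nonempty) (B : Finset X) (hB : B.Nonempty),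
        A = B → c A hA = c B hB := by
      intro A hA B hB h
      exact hEXT _ _ (by rw [hr, hr, h])
    set le : X → X → Prop := fun x y => c {x, y} (pairne x y) = y with hle
    have singeq : ∀ x : X, c {x} (Finset.singleton_nonempty x) = x := by
      intro x
      have := hcmem {x} (Finset.singleton_nonempty x)
      simpa using this
    have hrefl : ∀ x, le x x := by
      intro x
      simpa [hle] using singeq x
    have htotal : ∀ x y, le x y ∨ le y x := by
      intro x y
      have h := hcmem {x, y} (pairne x y)
      rcases Finset.mem_insert.mp h with h | h
      · right
        show c {y, x} (pairne y x) = x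
        rw [hcext {y, x} (pairne y x) {x, y} (pairne x y) (Finset.pair_comm y x)]
        exact h
      · left
        exact Finset.mem_singleton.mp h
    have hantisymm : ∀ x y, le x y → le y x → x = y := by
      intro x y h1 h2
      have h2' : c {x, y} (pairne x y) = x :=
        (hcext {x, y} (pairne x y) {y, x} (pairne y x) (Finset.pair_comm x y)).trans h2
      exact (h2'.symm.trans h1)
    have htrans : ∀ x y z, le x y → le y z → le x z := by
      intro x y z hxy hyz
      have hA : ({x, y, z} : Finset X).Nonempty := ⟨x, by simp⟩
      have hmem := hcmem {x, y, z} hA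
      simp only [Finset.mem_insert, Finset.mem_singleton] at hmem
      rcases hmem with h | h | h
      · -- c A = x, so c {x,y} = x, hence x = y
        have hsub : ({x, y} : Finset X) ⊆ {x, y, z} := by
          intro t ht; simp at ht; rcases ht with ht | ht <;> simp [ht]
        have := hcon {x, y, z} hA {x, y} (pairne x y) hsub (by rw [h]; simp)
        rw [hxy, h] at this
        subst this
        exact hyz
      · have hsub : ({y, z} : Finset X) ⊆ {x, y, z} := by
          intro t ht; simp at ht; rcases ht with ht | ht <;> simp [ht]
        have := hcon {x, y, z} hA {y, z} (pairne y z) hsub (by rw [h]; simp)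
        rw [hyz, h] at this
        subst this
        exact hxy
      · have hsub : ({x, z} : Finset X) ⊆ {x, y, z} := by
          intro t ht; simp at ht; rcases ht with ht | ht <;> simp [ht]
        have := hcon {x, y, z} hA {x, z} (pairne x z) hsub (by rw [h]; simp)
        rw [h] at this
        exact this
    have hdom : ∀ (a : T) (x : X), x ∈ ext a → le x (P a) := by
      intro a x hx
      have hca : c (ext a) (hne a) = P a := hEXT _ _ (by rw [hr])
      have hsub : ({x, P a} : Finset X) ⊆ ext a := by
        intro t ht; simp at ht; rcases ht with ht | ht
        · rw [ht]; exact hx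
        · rw [ht]; exact hP a
      have := hcon (ext a) (hne a) {x, P a} (pairne x (P a)) hsub (by rw [hca]; simp)
      rw [hca] at this
      exact this
    letI L : LinearOrder X :=
      { le := le
        le_refl := hrefl
        le_trans := htrans
        le_antisymm := hantisymm
        le_total := htotal
        toDecidableLE := Classical.decRel _ }
    refine ⟨L, ?_⟩
    intro a
    apply @le_antisymm X L.toPartialOrder
    · exact Finset.le_max' _ _ (hP a)
    · exact hdom a _ (Finset.max'_mem (α := X) (ext a) (hne a))
end

section
/- In an abstract represented-problem setup over X, the choice correspondence C_P of the decision procedure P is rationalizable — i.e. there exists a complete and transitive relation ⪰ on X (for all x, y, x ⪰ y or y ⪰ x, and ⪰ is transitive) such that for every nonempty finite A : Finset X, C_P(A) = {x ∈ A : ∀ y ∈ A, x ⪰ y} — if and only if P satisfies both γ⁺-extended (γ⁺E) and α-extended (αE). -/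
/-- In an abstract represented-problem setup over `X`, the choice
correspondence `C_P` of the decision procedure `P` is rationalizable by a complete
and transitive relation iff `P` satisfies γ⁺-extended and α-extended. -/
theorem stmt_2 {X T : Type*} [DecidableEq X] (ext : T → Finset X)
    (hne : ∀ a : T, (ext a).Nonempty)
    (P : T → X) (hP : ∀ a : T, P a ∈ ext a)
    (r : (A : Finset X) → A.Nonempty → T)
    (hr : ∀ (A : Finset X) (hA : A.Nonempty), ext (r A hA) = A) :
    (∃ R : X → X → Prop, (∀ x y : X, R x y ∨ R y x) ∧ Transitive R ∧
        ∀ A : Finset X, A.Nonempty →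
          {x : X | ∃ a : T, ext a = A ∧ P a = x} = {x : X | x ∈ A ∧ ∀ y ∈ A, R x y}) ↔
      ((∀ a b : T, P b ∈ ext a → ∃ d : T, ext d = ext a ∪ ext b ∧ P d = P a) ∧
        (∀ (a : T) (B : Finset X), B.Nonempty → P a ∈ B → B ⊆ ext a →
          ∃ b : T, ext b = B ∧ P b = P a)) := by
  constructor
  · rintro ⟨R, hcomp, htrans, hC⟩
    have mem : ∀ a : T, P a ∈ ext a ∧ ∀ y ∈ ext a, R (P a) y := by
      intro a
      have hx : P a ∈ {x : X | ∃ b, ext b = ext a ∧ P b = x} := ⟨a, rfl, rfl⟩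
      rw [hC (ext a) (hne a)] at hx
      exact hx
    constructor
    · intro a b hb
      have ha := mem a
      have hb' := mem b
      have hun : (ext a ∪ ext b).Nonempty := (hne a).mono Finset.subset_union_left
      have hPa : P a ∈ {x : X | x ∈ ext a ∪ ext b ∧ ∀ y ∈ ext a ∪ ext b, R x y} := by
        refine ⟨Finset.mem_union_left _ ha.1, ?_⟩
        intro y hy
        rcases Finset.mem_union.1 hy with h | h
        · exact ha.2 y h
        · exact htrans (ha.2 _ hb) (hb'.2 y h)
      rw [← hC _ hun] at hPa
      exact hPa
    · intro a B hB hPB hBsub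
      have ha := mem a
      have hPa : P a ∈ {x : X | x ∈ B ∧ ∀ y ∈ B, R x y} :=
        ⟨hPB, fun y hy => ha.2 y (hBsub hy)⟩
      rw [← hC _ hB] at hPa
      exact hPa
  · rintro ⟨hγ, hα⟩
    refine ⟨fun x y => ∃ c, ext c = ({x, y} : Finset X) ∧ P c = x, ?_, ?_, ?_⟩
    · intro x y
      have hpair : ({x, y} : Finset X).Nonempty := ⟨x, Finset.mem_insert_self _ _⟩
      have hmem := hP (r {x, y} hpair)
      rw [hr _ hpair] at hmem
      rcases Finset.mem_insert.1 hmem with h | h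
      · exact Or.inl ⟨r {x, y} hpair, hr _ hpair, h⟩
      · refine Or.inr ⟨r {x, y} hpair, ?_, Finset.mem_singleton.1 h⟩
        rw [hr _ hpair, Finset.pair_comm]
    · rintro x y z ⟨a, ha, hPax⟩ ⟨b, hb, hPby⟩
      have hPb : P b ∈ ext a := by rw [ha, hPby]; simp
      obtain ⟨d, hd, hPd⟩ := hγ a b hPb
      have hdu : ext d = ({x, y, z} : Finset X) := by
        rw [hd, ha, hb]
        ext w
        simp [Finset.mem_union, or_assoc]
      have hxz : ({x, z} : Finset X) ⊆ ext d := by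
        rw [hdu]
        intro w hw
        rcases Finset.mem_insert.1 hw with h | h
        · simp [h]
        · simp [Finset.mem_singleton.1 h]
      have hPdB : P d ∈ ({x, z} : Finset X) := by
        rw [hPd, hPax]; exact Finset.mem_insert_self _ _
      obtain ⟨c, hc, hPc⟩ := hα d {x, z} ⟨x, Finset.mem_insert_self _ _⟩ hPdB hxz
      exact ⟨c, hc, by rw [hPc, hPd, hPax]⟩
    · have key : ∀ n (A : Finset X), A.card = n → ∀ x, x ∈ A →
          (∀ y ∈ A, ∃ c, ext c = ({x, y} : Finset X) ∧ P c = x) →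
          ∃ a, ext a = A ∧ P a = x := by
        intro n
        induction n using Nat.strong_induction_on with
        | _ n ih =>
          intro A hcard x hx hall
          by_cases hA : A = {x}
          · subst hA
            have hpair : ({x} : Finset X).Nonempty := ⟨x, Finset.mem_singleton_self x⟩
            have hmem := hP (r {x} hpair)
            rw [hr _ hpair] at hmem
            exact ⟨r {x} hpair, hr _ hpair, Finset.mem_singleton.1 hmem⟩
          · obtain ⟨y, hy, hyx⟩ : ∃ y ∈ A, y ≠ x := by
              by_contra hcon
              push_neg at hcon
              exact hA (Finset.eq_singleton_iff_unique_mem.2 ⟨hx, hcon⟩)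
            have hx' : x ∈ A.erase y := Finset.mem_erase.2 ⟨fun h => hyx h.symm, hx⟩
            have hlt : (A.erase y).card < n := by
              rw [← hcard]
              exact Finset.card_erase_lt_of_mem hy
            obtain ⟨a, ha, hPa⟩ := ih _ hlt (A.erase y) rfl x hx'
              (fun z hz => hall z (Finset.mem_of_mem_erase hz))
            obtain ⟨c, hc, hPc⟩ := hall y hy
            have hPcA : P c ∈ ext a := by rw [ha, hPc]; exact hx'
            obtain ⟨d, hd, hPd⟩ := hγ a c hPcA
            refine ⟨d, ?_, by rw [hPd, hPa]⟩
            rw [hd, ha, hc]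
            apply Finset.Subset.antisymm
            · intro w hw
              rcases Finset.mem_union.1 hw with h | h
              · exact Finset.mem_of_mem_erase h
              · rcases Finset.mem_insert.1 h with h | h
                · rw [h]; exact hx
                · rw [Finset.mem_singleton.1 h]; exact hy
            · intro w hw
              by_cases hwy : w = y
              · exact Finset.mem_union_right _ (by simp [hwy])
              · exact Finset.mem_union_left _ (Finset.mem_erase.2 ⟨hwy, hw⟩)
      intro A hA
      ext x
      simp only [Set.mem_setOf_eq]
      constructor
      · rintro ⟨a, ha, hPa⟩
        have hxA : x ∈ A := by rw [← ha, ← hPa]; exact hP a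
        refine ⟨hxA, fun y hy => ?_⟩
        have hsub : ({x, y} : Finset X) ⊆ ext a := by
          rw [ha]
          intro w hw
          rcases Finset.mem_insert.1 hw with h | h
          · rw [h]; exact hxA
          · rw [Finset.mem_singleton.1 h]; exact hy
        have hPaB : P a ∈ ({x, y} : Finset X) := by
          rw [hPa]; exact Finset.mem_insert_self _ _
        obtain ⟨b, hb, hPb⟩ := hα a {x, y} ⟨x, Finset.mem_insert_self _ _⟩ hPaB hsub
        exact ⟨b, hb, by rw [hPb, hPa]⟩
      · rintro ⟨hxA, hall⟩
        exact key A.card A rfl x hxA hall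
end

section
/- In an abstract represented-problem setup over X, if the decision procedure P is extensional (EXT), then P satisfies α-extended (αE) if and only if P satisfies γ⁺-extended (γ⁺E). -/
/-- In an abstract represented-problem setup over `X`, if the decision
procedure `P` is extensional, then `P` satisfies α-extended iff it satisfies
γ⁺-extended. -/
theorem stmt_3 {X T : Type*} [DecidableEq X] (ext : T → Finset X)
    (hne : ∀ a : T, (ext a).Nonempty)
    (P : T → X) (hP : ∀ a : T, P a ∈ ext a)
    (r : (A : Finset X) → A.Nonempty → T)
    (hr : ∀ (A : Finset X) (hA : A.Nonempty), ext (r A hA) = A)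
    (hEXT : ∀ a b : T, ext a = ext b → P a = P b) :
    (∀ (a : T) (B : Finset X), B.Nonempty → P a ∈ B → B ⊆ ext a →
        ∃ b : T, ext b = B ∧ P b = P a) ↔
      (∀ a b : T, P b ∈ ext a → ∃ d : T, ext d = ext a ∪ ext b ∧ P d = P a) := by
  constructor
  · intro hα a b hPb
    have hDne : (ext a ∪ ext b).Nonempty := ((hne a).mono Finset.subset_union_left)
    set d := r (ext a ∪ ext b) hDne with hd
    have hextd : ext d = ext a ∪ ext b := hr _ _
    have key : P d ∈ ext a → P d = P a := by
      intro h
      obtain ⟨b', hb', hPb'⟩ := hα d (ext a) (hne a) h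
        (by rw [hextd]; exact Finset.subset_union_left)
      rw [← hPb']; exact hEXT b' a hb'
    have hPd : P d ∈ ext a ∪ ext b := hextd ▸ hP d
    rcases Finset.mem_union.1 hPd with h | h
    · exact ⟨d, hextd, key h⟩
    · obtain ⟨b'', hb'', hPb''⟩ := hα d (ext b) (hne b) h
        (by rw [hextd]; exact Finset.subset_union_right)
      have : P d = P b := by rw [← hPb'']; exact hEXT b'' b hb''
      exact ⟨d, hextd, key (this ▸ hPb)⟩
  · intro hγ a B hBne hPa hBsub
    set b0 := r B hBne with hb0
    have hextb0 : ext b0 = B := hr _ _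
    obtain ⟨d, hd, hPd⟩ := hγ b0 a (by rw [hextb0]; exact hPa)
    have hda : ext d = ext a := by
      rw [hd, hextb0, Finset.union_eq_right.2 hBsub]
    have : P b0 = P a := by rw [← hPd]; exact hEXT d a hda
    exact ⟨b0, hextb0, this⟩
end

section
/- Let P be a decision procedure on List2 X that is both extensional (EXT) and strongly inductive (SIND). Then P is rationalizable by choice function, i.e. there exists a linear order on X such that for every a : List2 X, P(a) is the maximum of the nonempty finite set ⟦a⟧ with respect to that order. -/
/-- The algebraic datatype `List2 X` of nonempty lists built from singletons and
concatenation. -/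
inductive List2 (X : Type) : Type where
  | Sing2 : X → List2 X
  | Cat : List2 X → List2 X → List2 X

variable {X : Type} [DecidableEq X]

/-- The extension of a represented decision problem: the set of alternatives it
contains. -/
def List2.ext : List2 X → Finset X
  | .Sing2 x => {x}
  | .Cat a b => a.ext ∪ b.ext

theorem List2.ext_nonempty : ∀ a : List2 X, a.ext.Nonempty
  | .Sing2 x => ⟨x, by simp [List2.ext]⟩
  | .Cat a b => (List2.ext_nonempty a).mono (by simp [List2.ext, Finset.subset_union_left])

/-- A decision procedure on `List2 X` that is extensional and strongly
inductive is rationalizable by choice function: there is a linear order on `X` such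
that `P a` is always the maximum of `⟦a⟧`. -/
theorem stmt_5 {X : Type} [DecidableEq X] (P : List2 X → X)
    (hP : ∀ a : List2 X, P a ∈ a.ext)
    (hEXT : ∀ a b : List2 X, a.ext = b.ext → P a = P b)
    (hSIND : ∀ x y : X,
      (∀ a b : List2 X, P a = x → P b = y → P (List2.Cat a b) = x) ∨
      (∀ a b : List2 X, P a = x → P b = y → P (List2.Cat a b) = y)) :
    ∃ L : LinearOrder X, ∀ a : List2 X,
      P a = @Finset.max' X L a.ext a.ext_nonempty := by
  classical
  have Psing : ∀ x : X, P (List2.Sing2 x) = x := by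
    intro x
    have := hP (List2.Sing2 x)
    simpa [List2.ext] using this
  set c : X → X → X :=
    fun x y => P (List2.Cat (List2.Sing2 x) (List2.Sing2 y)) with hc
  have cmem : ∀ x y, c x y = x ∨ c x y = y := by
    intro x y
    have := hP (List2.Cat (List2.Sing2 x) (List2.Sing2 y))
    simpa [List2.ext, Finset.mem_union] using this
  have ccomm : ∀ x y, c x y = c y x := by
    intro x y
    exact hEXT _ _ (by simp [List2.ext, Finset.union_comm])
  have cidem : ∀ x, c x x = x := by
    intro x; rcases cmem x x with h | h <;> exact h
  have key : ∀ a b, P (List2.Cat a b) = c (P a) (P b) := by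
    intro a b
    rcases hSIND (P a) (P b) with h | h
    · rw [h a b rfl rfl]
      exact (h _ _ (Psing _) (Psing _)).symm
    · rw [h a b rfl rfl]
      exact (h _ _ (Psing _) (Psing _)).symm
  have ctrans : ∀ x y z : X, c x y = y → c y z = z → c x z = z := by
    intro x y z hxy hyz
    have h1 : P (List2.Cat (List2.Sing2 x)
        (List2.Cat (List2.Sing2 y) (List2.Sing2 z))) = c x z := by
      rw [key, key, Psing, Psing, Psing]
      rw [show c y z = z from hyz]
    have h2 : P (List2.Cat (List2.Cat (List2.Sing2 x) (List2.Sing2 y))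
        (List2.Sing2 z)) = z := by
      rw [key, key, Psing, Psing, Psing]
      rw [show c x y = y from hxy]
      exact hyz
    have h3 : P (List2.Cat (List2.Sing2 x)
        (List2.Cat (List2.Sing2 y) (List2.Sing2 z)))
        = P (List2.Cat (List2.Cat (List2.Sing2 x) (List2.Sing2 y))
        (List2.Sing2 z)) := by
      apply hEXT
      simp [List2.ext, Finset.union_assoc]
      exact Finset.insert_comm _ _ _
    rw [← h1, h3, h2]
  have hle1 : ∀ x y, c x (c x y) = c x y := by
    intro x y
    rcases cmem x y with h | h
    · rw [h]; exact cidem x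
    · rw [h, h]
  have hle2 : ∀ x y, c y (c x y) = c x y := by
    intro x y
    rw [ccomm x y]; exact hle1 y x
  let L : LinearOrder X :=
    { le := fun x y => c x y = y
      le_refl := cidem
      le_trans := ctrans
      le_antisymm := by
        intro x y h1 h2
        rw [← h1, ccomm]; exact h2.symm
      le_total := by
        intro x y
        rcases cmem x y with h | h
        · right; show c y x = x; rw [ccomm]; exact h
        · left; exact h
      toDecidableLE := fun x y => inferInstanceAs (Decidable (c x y = y)) }
  have hub : ∀ a : List2 X, ∀ y ∈ a.ext, c y (P a) = P a := by
    intro a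
    induction a with
    | Sing2 x =>
      intro y hy
      simp only [List2.ext, Finset.mem_singleton] at hy
      subst hy
      rw [Psing]; exact cidem y
    | Cat a b iha ihb =>
      intro y hy
      rw [key]
      rcases Finset.mem_union.1 hy with h | h
      · exact ctrans y (P a) _ (iha y h) (hle1 _ _)
      · exact ctrans y (P b) _ (ihb y h) (hle2 _ _)
  refine ⟨L, fun a => ?_⟩
  exact L.le_antisymm _ _
    (Finset.le_max' (α := X) a.ext _ (hP a))
    (hub a _ (Finset.max'_mem (α := X) a.ext a.ext_nonempty))
end

section
/- Let P be a decision procedure on List2 X that is intensional (INT). Then P satisfies α-extended (αE). -/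
variable {X : Type} [DecidableEq X]

/-- `a.subst x y` is `a[y/x]`: replace every occurrence of `x` in `a` by `y`. -/
def List2.subst (x y : X) : List2 X → List2 X
  | .Sing2 z => .Sing2 (if z = x then y else z)
  | .Cat a b => .Cat (a.subst x y) (b.subst x y)

theorem List2.ext_subst (x y : X) : ∀ a : List2 X,
    (a.subst x y).ext = a.ext.image (fun z => if z = x then y else z)
  | .Sing2 z => by simp [List2.subst, List2.ext]
  | .Cat a b => by
      simp [List2.subst, List2.ext, Finset.image_union, List2.ext_subst x y a,
        List2.ext_subst x y b]

theorem List2.subst_subst (x t : X) : ∀ a : List2 X,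
    ((a.subst t x).subst x t) = a.subst x t
  | .Sing2 z => by
      simp only [List2.subst]
      congr 1
      split_ifs <;> simp_all
  | .Cat a b => by
      simp [List2.subst, List2.subst_subst x t a, List2.subst_subst x t b]

/-- An intensional decision procedure on `List2 X` satisfies
α-extended. -/
theorem stmt_6 {X : Type} [DecidableEq X] (P : List2 X → X)
    (hP : ∀ a : List2 X, P a ∈ a.ext)
    (hINT : ∀ (a : List2 X) (x y : X), P a = x → P (a.subst x y) = y) :
    ∀ (a : List2 X) (B : Finset X), B.Nonempty → P a ∈ B → B ⊆ a.ext →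
      ∃ b : List2 X, b.ext = B ∧ P b = P a := by
  -- substituting any x by the current winner preserves the winner
  have keep : ∀ (a : List2 X) (x : X), P (a.subst x (P a)) = P a := by
    intro a x
    have h1 : P (a.subst (P a) x) = x := hINT a (P a) x rfl
    have h2 : P ((a.subst (P a) x).subst x (P a)) = P a :=
      hINT (a.subst (P a) x) x (P a) h1
    rwa [List2.subst_subst] at h2
  intro a B hBne hPB hBsub
  have key : ∀ n : ℕ, ∀ a : List2 X, (a.ext \ B).card ≤ n → P a ∈ B → B ⊆ a.ext →
      ∃ b : List2 X, b.ext = B ∧ P b = P a := by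
    intro n
    induction n with
    | zero =>
      intro a hcard hPB hBsub
      have h0 : a.ext \ B = ∅ := Finset.card_eq_zero.mp (Nat.le_zero.mp hcard)
      exact ⟨a, Finset.Subset.antisymm (Finset.sdiff_eq_empty_iff_subset.mp h0) hBsub, rfl⟩
    | succ n ih =>
      intro a hcard hPB hBsub
      by_cases h : a.ext ⊆ B
      · exact ⟨a, Finset.Subset.antisymm h hBsub, rfl⟩
      · obtain ⟨x, hxa, hxB⟩ := Finset.not_subset.mp h
        set t := P a with ht
        have hxt : x ≠ t := fun hxt => hxB (hxt ▸ hPB)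
        set a' := a.subst x t with ha'
        have hPa' : P a' = t := keep a x
        have hext : a'.ext = a.ext.image (fun z => if z = x then t else z) :=
          List2.ext_subst x t a
        have hBsub' : B ⊆ a'.ext := by
          intro b hb
          rw [hext]
          refine Finset.mem_image.mpr ⟨b, hBsub hb, ?_⟩
          have : b ≠ x := fun hbx => hxB (hbx ▸ hb)
          simp [this]
        have hdiff : a'.ext \ B ⊆ (a.ext \ B).erase x := by
          intro z hz
          obtain ⟨hz1, hz2⟩ := Finset.mem_sdiff.mp hz
          rw [hext] at hz1
          obtain ⟨w, hw, hwz⟩ := Finset.mem_image.mp hz1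
          by_cases hwx : w = x
          · exfalso; apply hz2; simp [hwx] at hwz; rw [← hwz]; exact hPB
          · simp only [if_neg hwx] at hwz
            subst hwz
            exact Finset.mem_erase.mpr ⟨hwx, Finset.mem_sdiff.mpr ⟨hw, hz2⟩⟩
        have hcard' : (a'.ext \ B).card ≤ n := by
          have h1 : ((a.ext \ B).erase x).card = (a.ext \ B).card - 1 :=
            Finset.card_erase_of_mem (Finset.mem_sdiff.mpr ⟨hxa, hxB⟩)
          have := Finset.card_le_card hdiff
          omega
        obtain ⟨b, hb1, hb2⟩ := ih a' hcard' (hPa' ▸ hPB) hBsub'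
        exact ⟨b, hb1, by rw [hb2, hPa']⟩
  exact key (a.ext \ B).card a le_rfl hPB hBsub
end

section
/- Let P be a decision procedure on List2 X that is both extensional (EXT) and strongly inductive (SIND). Then P satisfies α-extended (αE). -/
variable {X : Type} [DecidableEq X]

/-- A decision procedure on `List2 X` that is extensional and strongly
inductive satisfies α-extended. -/
theorem stmt_7 {X : Type} [DecidableEq X] (P : List2 X → X)
    (hP : ∀ a : List2 X, P a ∈ a.ext)
    (hEXT : ∀ a b : List2 X, a.ext = b.ext → P a = P b)
    (hSIND : ∀ x y : X,
      (∀ a b : List2 X, P a = x → P b = y → P (List2.Cat a b) = x) ∨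
      (∀ a b : List2 X, P a = x → P b = y → P (List2.Cat a b) = y)) :
    ∀ (a : List2 X) (B : Finset X), B.Nonempty → P a ∈ B → B ⊆ a.ext →
      ∃ b : List2 X, b.ext = B ∧ P b = P a := by
  have hrep : ∀ B : Finset X, B.Nonempty → ∃ c : List2 X, c.ext = B := by
    intro B hB
    induction hB using Finset.Nonempty.cons_induction with
    | singleton x => exact ⟨List2.Sing2 x, rfl⟩
    | cons x B hx hB ih =>
      obtain ⟨c, hc⟩ := ih
      exact ⟨List2.Cat (List2.Sing2 x) c, by
        simp [List2.ext, hc, Finset.cons_eq_insert]⟩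
  intro a B hBne hPa hBsub
  obtain ⟨c, hc⟩ := hrep B hBne
  have hsing : P (List2.Sing2 (P a)) = P a := by
    have := hP (List2.Sing2 (P a))
    simpa [List2.ext] using this
  rcases hSIND (P a) (P c) with h | h
  · refine ⟨List2.Cat (List2.Sing2 (P a)) c, ?_, ?_⟩
    · rw [List2.ext, List2.ext, hc, ← Finset.insert_eq, Finset.insert_eq_self.mpr hPa]
    · exact h _ _ hsing rfl
  · refine ⟨c, hc, ?_⟩
    have h1 : P (List2.Cat a c) = P c := h a c rfl rfl
    have h2 : (List2.Cat a c).ext = a.ext := by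
      simp [List2.ext, Finset.union_eq_left.mpr (hc ▸ hBsub)]
    have := hEXT _ _ h2
    rw [h1] at this
    exact this
end

section
/- Let P be a decision procedure on List2 X that is strongly inductive (SIND) and satisfies T-independence of irrelevant alternatives (TIIA). Then P satisfies α-extended (αE). -/
variable {X : Type} [DecidableEq X]

/-- A decision procedure on `List2 X` that is strongly inductive and
satisfies T-independence of irrelevant alternatives satisfies α-extended. -/
theorem stmt_8 {X : Type} [DecidableEq X] (P : List2 X → X)
    (hP : ∀ a : List2 X, P a ∈ a.ext)
    (hSIND : ∀ x y : X,
      (∀ a b : List2 X, P a = x → P b = y → P (List2.Cat a b) = x) ∨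
      (∀ a b : List2 X, P a = x → P b = y → P (List2.Cat a b) = y))
    (hTIIA₁ : ∀ (a₁ a₂ : List2 X) (x y : X),
      P (List2.Cat a₁ a₂) = x → P a₁ = y → y ≠ x →
        ∃ b : List2 X, b.ext = (a₁.ext \ {y}) ∪ {x} ∧ P (List2.Cat b a₂) = x)
    (hTIIA₂ : ∀ (a₁ a₂ : List2 X) (x y : X),
      P (List2.Cat a₁ a₂) = x → P a₂ = y → y ≠ x →
        ∃ b : List2 X, b.ext = (a₂.ext \ {y}) ∪ {x} ∧ P (List2.Cat a₁ b) = x) :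
    ∀ (a : List2 X) (B : Finset X), B.Nonempty → P a ∈ B → B ⊆ a.ext →
      ∃ b : List2 X, b.ext = B ∧ P b = P a := by
  -- consistency of P on Cat: value depends only on the winners of the parts
  have hcons : ∀ a₁ b₁ a₂ b₂ : List2 X, P a₁ = P a₂ → P b₁ = P b₂ →
      P (List2.Cat a₁ b₁) = P (List2.Cat a₂ b₂) := by
    intro a₁ b₁ a₂ b₂ h1 h2
    rcases hSIND (P a₁) (P b₁) with h | h
    · rw [h a₁ b₁ rfl rfl, h a₂ b₂ h1.symm h2.symm]
    · rw [h a₁ b₁ rfl rfl, h a₂ b₂ h1.symm h2.symm]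
  have hmem : ∀ a b : List2 X, P (List2.Cat a b) = P a ∨ P (List2.Cat a b) = P b := by
    intro a b
    rcases hSIND (P a) (P b) with h | h
    · exact Or.inl (h a b rfl rfl)
    · exact Or.inr (h a b rfl rfl)
  -- removal lemma
  have hrem : ∀ (a : List2 X) (y : X), y ∈ a.ext → y ≠ P a →
      ∃ a' : List2 X, a'.ext = (a.ext \ {y}) ∪ {P a} ∧ P a' = P a := by
    intro a
    induction a with
    | Sing2 z =>
      intro y hy hne
      have hz : P (List2.Sing2 z) = z := by simpa [List2.ext] using hP (List2.Sing2 z)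
      simp only [List2.ext, Finset.mem_singleton] at hy
      exact absurd (hy.trans hz.symm) hne
    | Cat a₁ a₂ ih₁ ih₂ =>
      intro y hy hne
      have hx1 : P a₁ ∈ a₁.ext := hP a₁
      have hx2 : P a₂ ∈ a₂.ext := hP a₂
      simp only [List2.ext, Finset.mem_union] at hy
      by_cases hy1 : y = P a₁
      · -- TIIA on the left
        have hxx2 : P (List2.Cat a₁ a₂) = P a₂ := by
          rcases hmem a₁ a₂ with h | h
          · exact absurd (hy1.trans h.symm) hne
          · exact h
        obtain ⟨b, hbext, hbP⟩ :=
          hTIIA₁ a₁ a₂ (P (List2.Cat a₁ a₂)) y rfl hy1.symm hne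
        by_cases hy2 : y ∈ a₂.ext
        · have hne2 : y ≠ P a₂ := fun h => hne (h.trans hxx2.symm)
          obtain ⟨b₂, hb2ext, hb2P⟩ := ih₂ y hy2 hne2
          refine ⟨List2.Cat b b₂, ?_, ?_⟩
          · have hx2' : P a₂ ∈ a₂.ext \ {y} :=
              Finset.mem_sdiff.2 ⟨hx2, by simpa using (Ne.symm hne2)⟩
            ext t
            simp only [List2.ext, Finset.mem_union, hbext, hb2ext, Finset.mem_sdiff,
              Finset.mem_singleton, hxx2]
            constructor
            · rintro ((⟨h, h'⟩ | h) | (⟨h, h'⟩ | h)) <;> simp_all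
            · rintro (⟨(h | h), h'⟩ | h) <;> simp_all
          · have : P (List2.Cat b b₂) = P (List2.Cat b a₂) := hcons _ _ _ _ rfl hb2P
            exact this.trans hbP
        · refine ⟨List2.Cat b a₂, ?_, hbP⟩
          ext t
          simp only [List2.ext, Finset.mem_union, hbext, Finset.mem_sdiff,
            Finset.mem_singleton]
          constructor
          · rintro ((⟨h, h'⟩ | h) | h)
            · tauto
            · tauto
            · exact Or.inl ⟨Or.inr h, fun he => hy2 (he ▸ h)⟩
          · rintro (⟨(h | h), h'⟩ | h) <;> tauto
      · by_cases hy2 : y = P a₂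
        · -- TIIA on the right
          have hxx1 : P (List2.Cat a₁ a₂) = P a₁ := by
            rcases hmem a₁ a₂ with h | h
            · exact h
            · exact absurd (hy2.trans h.symm) hne
          obtain ⟨b, hbext, hbP⟩ :=
            hTIIA₂ a₁ a₂ (P (List2.Cat a₁ a₂)) y rfl hy2.symm hne
          by_cases hy1' : y ∈ a₁.ext
          · have hne1 : y ≠ P a₁ := hy1
            obtain ⟨b₁, hb1ext, hb1P⟩ := ih₁ y hy1' hne1
            refine ⟨List2.Cat b₁ b, ?_, ?_⟩
            · have hx1' : P a₁ ∈ a₁.ext \ {y} :=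
                Finset.mem_sdiff.2 ⟨hx1, by simpa using (Ne.symm hne1)⟩
              ext t
              simp only [List2.ext, Finset.mem_union, hbext, hb1ext, Finset.mem_sdiff,
                Finset.mem_singleton, hxx1]
              constructor
              · rintro ((⟨h, h'⟩ | h) | (⟨h, h'⟩ | h)) <;> simp_all
              · rintro (⟨(h | h), h'⟩ | h) <;> simp_all
            · have : P (List2.Cat b₁ b) = P (List2.Cat a₁ b) := hcons _ _ _ _ hb1P rfl
              exact this.trans hbP
          · refine ⟨List2.Cat a₁ b, ?_, hbP⟩
            ext t
            simp only [List2.ext, Finset.mem_union, hbext, Finset.mem_sdiff,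
              Finset.mem_singleton]
            constructor
            · rintro (h | (⟨h, h'⟩ | h))
              · exact Or.inl ⟨Or.inl h, fun he => hy1' (he ▸ h)⟩
              · tauto
              · tauto
            · rintro (⟨(h | h), h'⟩ | h) <;> tauto
        · -- y is neither winner: use IH on whichever sides contain y
          have hxmem : P (List2.Cat a₁ a₂) ∈ a₁.ext ∪ a₂.ext := by
            have := hP (List2.Cat a₁ a₂); simpa [List2.ext] using this
          obtain ⟨b₁, hb1ext, hb1P⟩ :
              ∃ b₁ : List2 X, b₁.ext = (a₁.ext \ {y}) ∪ {P a₁} ∧ P b₁ = P a₁ := by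
            by_cases h : y ∈ a₁.ext
            · exact ih₁ y h hy1
            · refine ⟨a₁, ?_, rfl⟩
              rw [Finset.sdiff_singleton_eq_erase, Finset.erase_eq_of_notMem h]
              exact (Finset.union_eq_left.2 (by simpa using hx1)).symm
          obtain ⟨b₂, hb2ext, hb2P⟩ :
              ∃ b₂ : List2 X, b₂.ext = (a₂.ext \ {y}) ∪ {P a₂} ∧ P b₂ = P a₂ := by
            by_cases h : y ∈ a₂.ext
            · exact ih₂ y h hy2
            · refine ⟨a₂, ?_, rfl⟩
              rw [Finset.sdiff_singleton_eq_erase, Finset.erase_eq_of_notMem h]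
              exact (Finset.union_eq_left.2 (by simpa using hx2)).symm
          refine ⟨List2.Cat b₁ b₂, ?_, hcons _ _ _ _ hb1P hb2P⟩
          ext t
          simp only [List2.ext, Finset.mem_union, hb1ext, hb2ext, Finset.mem_sdiff,
            Finset.mem_singleton]
          constructor
          · rintro ((⟨h, h'⟩ | rfl) | (⟨h, h'⟩ | rfl))
            · exact Or.inl ⟨Or.inl h, h'⟩
            · exact Or.inl ⟨Or.inl hx1, fun h => hy1 h.symm⟩
            · exact Or.inl ⟨Or.inr h, h'⟩
            · exact Or.inl ⟨Or.inr hx2, fun h => hy2 h.symm⟩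
          · rintro (⟨h | h, h'⟩ | rfl)
            · exact Or.inl (Or.inl ⟨h, h'⟩)
            · exact Or.inr (Or.inl ⟨h, h'⟩)
            · rcases hmem a₁ a₂ with h | h
              · rw [h]; exact Or.inl (Or.inr rfl)
              · rw [h]; exact Or.inr (Or.inr rfl)
  -- main induction on the number of elements to remove
  have main : ∀ (n : ℕ) (a : List2 X) (B : Finset X), (a.ext \ B).card ≤ n →
      B.Nonempty → P a ∈ B → B ⊆ a.ext → ∃ b : List2 X, b.ext = B ∧ P b = P a := by
    intro n
    induction n with
    | zero =>
      intro a B hcard _ _ hsub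
      have h0 : a.ext \ B = ∅ := Finset.card_eq_zero.1 (Nat.le_zero.1 hcard)
      have : a.ext ⊆ B := fun t ht => by
        by_contra h
        exact (Finset.notMem_empty t) (h0 ▸ Finset.mem_sdiff.2 ⟨ht, h⟩)
      exact ⟨a, Finset.Subset.antisymm this hsub, rfl⟩
    | succ n ih =>
      intro a B hcard hne hPB hsub
      by_cases h : a.ext ⊆ B
      · exact ⟨a, Finset.Subset.antisymm h hsub, rfl⟩
      · obtain ⟨y, hya, hyB⟩ := Finset.not_subset.1 h
        have hyP : y ≠ P a := fun he => hyB (he ▸ hPB)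
        obtain ⟨a', ha'ext, ha'P⟩ := hrem a y hya hyP
        have hsub' : B ⊆ a'.ext := by
          intro t ht
          rw [ha'ext]
          rcases eq_or_ne t (P a) with rfl | htP
          · simp
          · exact Finset.mem_union_left _ (Finset.mem_sdiff.2 ⟨hsub ht,
              by simp only [Finset.mem_singleton]; exact fun he => hyB (he ▸ ht)⟩)
        have hcard' : (a'.ext \ B).card ≤ n := by
          have hss : a'.ext \ B ⊆ (a.ext \ B).erase y := by
            intro t ht
            rw [ha'ext] at ht
            rcases Finset.mem_sdiff.1 ht with ⟨ht1, ht2⟩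
            rcases Finset.mem_union.1 ht1 with h' | h'
            · rcases Finset.mem_sdiff.1 h' with ⟨h1, h2⟩
              exact Finset.mem_erase.2 ⟨by simpa using h2, Finset.mem_sdiff.2 ⟨h1, ht2⟩⟩
            · exact absurd (Finset.mem_singleton.1 h' ▸ hPB) ht2
          calc (a'.ext \ B).card ≤ ((a.ext \ B).erase y).card := Finset.card_le_card hss
            _ = (a.ext \ B).card - 1 :=
              Finset.card_erase_of_mem (Finset.mem_sdiff.2 ⟨hya, hyB⟩)
            _ ≤ n := by omega
        obtain ⟨b, hbext, hbP⟩ := ih a' B hcard' hne (ha'P ▸ hPB) hsub'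
        exact ⟨b, hbext, hbP.trans ha'P⟩
  intro a B hne hPB hsub
  exact main (a.ext \ B).card a B le_rfl hne hPB hsub
end

section
/- There exist a type X and a decision procedure P on NList X such that P satisfies α-extended (αE) but P is not strongly inductive (SIND). (For example, on a type with at least three elements, the procedure that returns the single element of a singleton list and otherwise returns the second element of the list.) -/
/-- The algebraic datatype `NList X` of nonempty lists. -/
inductive NList (X : Type) : Type where
  | Sing : X → NList X
  | Cons : X → NList X → NList X

/-- The extension of a represented decision problem on `NList`. -/
def NList.ext {X : Type} [DecidableEq X] : NList X → Finset X
  | .Sing x => {x}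
  | .Cons x l => {x} ∪ l.ext

/-- Head of a nonempty list. -/
def NList.hd {X : Type} : NList X → X
  | .Sing x => x
  | .Cons x _ => x

/-- Build an `NList` from a head and a tail list. -/
def NList.ofL {X : Type} : X → List X → NList X
  | x, [] => .Sing x
  | x, y :: l => .Cons x (NList.ofL y l)

lemma NList.hd_mem_ext {X : Type} [DecidableEq X] (a : NList X) : a.hd ∈ a.ext := by
  cases a with
  | Sing x => simp [NList.hd, NList.ext]
  | Cons x l => simp [NList.hd, NList.ext]

lemma NList.ext_ofL {X : Type} [DecidableEq X] (x : X) (l : List X) :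
    (NList.ofL x l).ext = insert x l.toFinset := by
  induction l generalizing x with
  | nil => simp [NList.ofL, NList.ext]
  | cons y t ih =>
      simp [NList.ofL, NList.ext, ih, Finset.insert_union, Finset.union_comm]
      ext z; simp; tauto

lemma NList.hd_ofL {X : Type} (x : X) (l : List X) : (NList.ofL x l).hd = x := by
  cases l <;> simp [NList.ofL, NList.hd]

/-- The "second element" procedure. -/
def Psecond {X : Type} : NList X → X
  | .Sing x => x
  | .Cons _ l => l.hd

/-- There are a type `X` and a decision procedure `P` on `NList X`
that satisfies α-extended but is not strongly inductive. -/
theorem stmt_9 : ∃ (X : Type) (inst : DecidableEq X),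
    letI := inst
    ∃ P : NList X → X,
      (∀ a : NList X, P a ∈ a.ext) ∧
      -- αE
      (∀ (a : NList X) (B : Finset X), B.Nonempty → P a ∈ B → B ⊆ a.ext →
        ∃ b : NList X, b.ext = B ∧ P b = P a) ∧
      -- not SIND
      ¬((∀ x : X, P (NList.Sing x) = x) ∧
        ∀ x y : X,
          (∀ a : NList X, P a = y → P (NList.Cons x a) = x) ∨
          (∀ a : NList X, P a = y → P (NList.Cons x a) = y)) := by
  refine ⟨Bool, inferInstance, Psecond, ?_, ?_, ?_⟩
  · intro a
    cases a with
    | Sing x => simp [Psecond, NList.ext]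
    | Cons x l =>
        simp only [Psecond, NList.ext, Finset.mem_union]
        exact Or.inr (NList.hd_mem_ext l)
  · intro a B hne hmem hsub
    set p := Psecond a with hp
    rcases h : (B.erase p).toList with _ | ⟨z, t⟩
    · refine ⟨.Sing p, ?_, rfl⟩
      have : B.erase p = ∅ := by
        have := congrArg List.toFinset h
        simpa using this
      have : B ⊆ {p} := by
        intro x hx
        by_contra hxp
        simp at hxp
        have : x ∈ B.erase p := Finset.mem_erase.mpr ⟨hxp, hx⟩
        simp [‹B.erase p = ∅›] at this
      have : B = {p} := Finset.Subset.antisymm this (by simpa using hmem)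
      simp [NList.ext, this]
    · refine ⟨.Cons z (NList.ofL p t), ?_, ?_⟩
      · have hzt : (z :: t).toFinset = B.erase p := by
          rw [← h]; simp
        have hB : B = insert p ((z :: t).toFinset) := by
          rw [hzt, Finset.insert_erase hmem]
        rw [hB]
        ext w
        simp [NList.ext, NList.ext_ofL]
      · simp [Psecond, NList.hd_ofL]
  · rintro ⟨-, h2⟩
    rcases h2 false false with h | h
    · have := h (.Cons true (.Sing false)) rfl
      simp [Psecond, NList.hd] at this
    · have := h (.Cons true (.Sing false)) rfl
      simp [Psecond, NList.hd] at this
end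

section
/- There exist a type X and a decision procedure P on Tree X such that P satisfies T-independence of irrelevant alternatives (TIIA) but does not satisfy α-extended (αE). (For example, the larger-sub-problem-bias procedure: fix a linear order on X and a threshold N ≥ 1; on trees a with |⟦a⟧| ≤ N return the maximum of ⟦a⟧, and on a node recurse into the sub-tree whose extension is largest.) -/
/-- The algebraic datatype `Tree3 X` (the paper's `Tree`) of ternary trees with values at the leaves. -/
inductive Tree3 (X : Type) : Type where
  | Leaf : X → Tree3 X
  | Node : Tree3 X → Tree3 X → Tree3 X → Tree3 X

/-- The extension of a represented decision problem on `Tree3`. -/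
def Tree3.ext {X : Type} [DecidableEq X] : Tree3 X → Finset X
  | .Leaf x => {x}
  | .Node t₁ t₂ t₃ => t₁.ext ∪ t₂.ext ∪ t₃.ext

namespace Stmt10Aux

abbrev X3 := Fin 3
abbrev St := Finset X3 × X3

def h (r₁ r₂ r₃ : St) : X3 :=
  let T := r₁.1 ∪ r₂.1 ∪ r₃.1
  if r₁ = ({1}, 1) ∧ r₂.2 = 1 then 1
  else if r₁ = ({0}, 0) ∧ r₂.2 = 0 ∧
      (r₃.2 = 0 ∨ (r₃.1 = {2} ∧ 2 ∉ r₂.1) ∨ (1 ∈ r₃.1 ∧ 2 ∈ r₃.1 ∧ r₃.2 ≠ 2)) then 0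
  else if 2 ∈ T then 2 else if 1 ∈ T then 1 else 0

def R : List St :=
  [({0}, 0), ({1}, 1), ({2}, 2),
   ({0,1}, 1), ({0,2}, 0), ({0,2}, 2), ({1,2}, 1), ({1,2}, 2),
   ({0,1,2}, 0), ({0,1,2}, 1), ({0,1,2}, 2)]

def Q : Tree3 X3 → St
  | .Leaf v => ({v}, v)
  | .Node t₁ t₂ t₃ => ((Q t₁).1 ∪ (Q t₂).1 ∪ (Q t₃).1, h (Q t₁) (Q t₂) (Q t₃))

def P (t : Tree3 X3) : X3 := (Q t).2

lemma Q_ext : ∀ t : Tree3 X3, (Q t).1 = t.ext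
  | .Leaf v => rfl
  | .Node t₁ t₂ t₃ => by
      simp only [Q, Tree3.ext, Q_ext t₁, Q_ext t₂, Q_ext t₃]

set_option synthInstance.maxHeartbeats 400000 in
set_option synthInstance.maxSize 1000 in
set_option maxHeartbeats 4000000 in
lemma master : ∀ r₁ ∈ R, ∀ r₂ ∈ R, ∀ r₃ ∈ R,
    ((r₁.1 ∪ r₂.1 ∪ r₃.1, h r₁ r₂ r₃) ∈ R ∧ h r₁ r₂ r₃ ∈ r₁.1 ∪ r₂.1 ∪ r₃.1) ∧
    (r₁.2 ≠ h r₁ r₂ r₃ → ∃ w : X3,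
      ((r₁.1 \ {r₁.2} ∪ {h r₁ r₂ r₃}, w) ∈ R ∧
        h (r₁.1 \ {r₁.2} ∪ {h r₁ r₂ r₃}, w) r₂ r₃ = h r₁ r₂ r₃)) ∧
    (r₂.2 ≠ h r₁ r₂ r₃ → ∃ w : X3,
      ((r₂.1 \ {r₂.2} ∪ {h r₁ r₂ r₃}, w) ∈ R ∧
        h r₁ (r₂.1 \ {r₂.2} ∪ {h r₁ r₂ r₃}, w) r₃ = h r₁ r₂ r₃)) ∧
    (r₃.2 ≠ h r₁ r₂ r₃ → ∃ w : X3,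
      ((r₃.1 \ {r₃.2} ∪ {h r₁ r₂ r₃}, w) ∈ R ∧
        h r₁ r₂ (r₃.1 \ {r₃.2} ∪ {h r₁ r₂ r₃}, w) = h r₁ r₂ r₃)) := by decide

lemma treeR : ∀ t : Tree3 X3, Q t ∈ R
  | .Leaf v => by fin_cases v <;> decide
  | .Node t₁ t₂ t₃ =>
      ((master _ (treeR t₁) _ (treeR t₂) _ (treeR t₃)).1).1

lemma realize : ∀ r ∈ R, ∃ t : Tree3 X3, Q t = r := by
  intro r hr
  fin_cases hr
  · exact ⟨.Leaf 0, by decide⟩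
  · exact ⟨.Leaf 1, by decide⟩
  · exact ⟨.Leaf 2, by decide⟩
  · exact ⟨.Node (.Leaf 1) (.Leaf 0) (.Leaf 0), by decide⟩
  · exact ⟨.Node (.Leaf 0) (.Leaf 0) (.Leaf 2), by decide⟩
  · exact ⟨.Node (.Leaf 2) (.Leaf 0) (.Leaf 0), by decide⟩
  · exact ⟨.Node (.Leaf 1) (.Leaf 1) (.Leaf 2), by decide⟩
  · exact ⟨.Node (.Leaf 2) (.Leaf 1) (.Leaf 1), by decide⟩
  · exact ⟨.Node (.Leaf 0) (.Leaf 0) (.Node (.Leaf 1) (.Leaf 1) (.Leaf 2)), by decide⟩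
  · exact ⟨.Node (.Leaf 1) (.Leaf 1) (.Node (.Leaf 0) (.Leaf 0) (.Leaf 2)), by decide⟩
  · exact ⟨.Node (.Leaf 2) (.Leaf 0) (.Leaf 1), by decide⟩

end Stmt10Aux

open Stmt10Aux

/-- There are a type `X` and a decision procedure `P` on `Tree3 X`
satisfying T-independence of irrelevant alternatives but not α-extended. -/
theorem stmt_10 : ∃ (X : Type) (inst : DecidableEq X),
    letI := inst
    ∃ P : Tree3 X → X,
      (∀ a : Tree3 X, P a ∈ a.ext) ∧
      -- TIIA (one clause per sub-tree position)
      (∀ (t₁ t₂ t₃ : Tree3 X) (x y : X), P (Tree3.Node t₁ t₂ t₃) = x → P t₁ = y → y ≠ x →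
        ∃ b : Tree3 X, b.ext = (t₁.ext \ {y}) ∪ {x} ∧ P (Tree3.Node b t₂ t₃) = x) ∧
      (∀ (t₁ t₂ t₃ : Tree3 X) (x y : X), P (Tree3.Node t₁ t₂ t₃) = x → P t₂ = y → y ≠ x →
        ∃ b : Tree3 X, b.ext = (t₂.ext \ {y}) ∪ {x} ∧ P (Tree3.Node t₁ b t₃) = x) ∧
      (∀ (t₁ t₂ t₃ : Tree3 X) (x y : X), P (Tree3.Node t₁ t₂ t₃) = x → P t₃ = y → y ≠ x →
        ∃ b : Tree3 X, b.ext = (t₃.ext \ {y}) ∪ {x} ∧ P (Tree3.Node t₁ t₂ b) = x) ∧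
      -- not αE
      ¬(∀ (a : Tree3 X) (B : Finset X), B.Nonempty → P a ∈ B → B ⊆ a.ext →
        ∃ b : Tree3 X, b.ext = B ∧ P b = P a) := by
  refine ⟨Fin 3, inferInstance, Stmt10Aux.P, ?_, ?_, ?_, ?_, ?_⟩
  · intro a
    match a with
    | .Leaf v => exact Finset.mem_singleton_self v
    | .Node t₁ t₂ t₃ =>
      have hm := ((master _ (treeR t₁) _ (treeR t₂) _ (treeR t₃)).1).2
      show h (Q t₁) (Q t₂) (Q t₃) ∈ (Tree3.Node t₁ t₂ t₃).ext
      rwa [Q_ext t₁, Q_ext t₂, Q_ext t₃] at hm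
  · intro t₁ t₂ t₃ x y hx hy hyx
    have hm := (master _ (treeR t₁) _ (treeR t₂) _ (treeR t₃)).2.1
    subst hx; subst hy
    obtain ⟨w, hwR, hw⟩ := hm hyx
    obtain ⟨b, hb⟩ := realize _ hwR
    refine ⟨b, ?_, ?_⟩
    · have h1 : b.ext = (Q t₁).1 \ {(Q t₁).2} ∪ {h (Q t₁) (Q t₂) (Q t₃)} := by
        rw [← Q_ext b, hb]
      rw [h1, Q_ext t₁]; rfl
    · show h (Q b) (Q t₂) (Q t₃) = _
      rw [hb]; exact hw
  · intro t₁ t₂ t₃ x y hx hy hyx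
    have hm := (master _ (treeR t₁) _ (treeR t₂) _ (treeR t₃)).2.2.1
    subst hx; subst hy
    obtain ⟨w, hwR, hw⟩ := hm hyx
    obtain ⟨b, hb⟩ := realize _ hwR
    refine ⟨b, ?_, ?_⟩
    · have h1 : b.ext = (Q t₂).1 \ {(Q t₂).2} ∪ {h (Q t₁) (Q t₂) (Q t₃)} := by
        rw [← Q_ext b, hb]
      rw [h1, Q_ext t₂]; rfl
    · show h (Q t₁) (Q b) (Q t₃) = _
      rw [hb]; exact hw
  · intro t₁ t₂ t₃ x y hx hy hyx
    have hm := (master _ (treeR t₁) _ (treeR t₂) _ (treeR t₃)).2.2.2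
    subst hx; subst hy
    obtain ⟨w, hwR, hw⟩ := hm hyx
    obtain ⟨b, hb⟩ := realize _ hwR
    refine ⟨b, ?_, ?_⟩
    · have h1 : b.ext = (Q t₃).1 \ {(Q t₃).2} ∪ {h (Q t₁) (Q t₂) (Q t₃)} := by
        rw [← Q_ext b, hb]
      rw [h1, Q_ext t₃]; rfl
    · show h (Q t₁) (Q t₂) (Q b) = _
      rw [hb]; exact hw
  · intro hαE
    have hQa : Q (.Node (.Leaf 0) (.Leaf 0) (.Node (.Leaf 1) (.Leaf 1) (.Leaf 2))) =
        ({0,1,2}, 0) := by decide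
    obtain ⟨b, hbe, hbP⟩ := hαE
      (.Node (.Leaf 0) (.Leaf 0) (.Node (.Leaf 1) (.Leaf 1) (.Leaf 2)))
      ({0,1} : Finset (Fin 3)) (by decide)
      (by show (Q _).2 ∈ _; rw [hQa]; decide)
      (by rw [← Q_ext, hQa]; decide)
    have hQb : Q b = ({0,1}, 0) := by
      refine Prod.ext ?_ ?_
      · rw [Q_ext b, hbe]
      · show P b = 0
        rw [hbP]; show (Q _).2 = 0; rw [hQa]
    have := treeR b
    rw [hQb] at this
    exact absurd this (by decide)
end

section
/- There exist a type X and a decision procedure P on Tree X such that P satisfies α-extended (αE) but does not satisfy T-independence of irrelevant alternatives (TIIA). (For example, the smaller-sub-problem-bias procedure: fix a linear order on X and a threshold N ≥ 1; on trees a with |⟦a⟧| ≤ N return the maximum of ⟦a⟧, and on a node recurse into the sub-tree whose extension is smallest.) -/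
/-- A decision procedure on `Tree3 ℕ`: at a node, if the middle child's
extension is exactly `{1}`, take the value of the third child, otherwise the
value of the first child. -/
def myP : Tree3 ℕ → ℕ
  | .Leaf x => x
  | .Node a b c => if b.ext = {1} then myP c else myP a

lemma myP_mem : ∀ t : Tree3 ℕ, myP t ∈ t.ext := by
  intro t
  induction t with
  | Leaf x => simp [myP, Tree3.ext]
  | Node a b c ha hb hc =>
    simp only [myP, Tree3.ext]
    split_ifs with h
    · exact Finset.mem_union_right _ hc
    · exact Finset.mem_union_left _ (Finset.mem_union_left _ ha)

lemma exists_ext (B : Finset ℕ) (hB : B.Nonempty) : ∃ t : Tree3 ℕ, t.ext = B := by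
  classical
  induction B using Finset.induction with
  | empty => simp at hB
  | insert _ _ hnot ih =>
    rename_i a s
    by_cases hs : s.Nonempty
    · obtain ⟨t, ht⟩ := ih hs
      exact ⟨.Node (.Leaf a) t t, by simp [Tree3.ext, ht, Finset.insert_eq, -Finset.singleton_union]⟩
    · rw [Finset.not_nonempty_iff_eq_empty] at hs
      subst hs
      exact ⟨.Leaf a, by simp [Tree3.ext]⟩

/-- There are a type `X` and a decision procedure `P` on `Tree3 X`
satisfying α-extended but not T-independence of irrelevant alternatives. -/
theorem stmt_11 : ∃ (X : Type) (inst : DecidableEq X),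
    letI := inst
    ∃ P : Tree3 X → X,
      (∀ a : Tree3 X, P a ∈ a.ext) ∧
      -- αE
      (∀ (a : Tree3 X) (B : Finset X), B.Nonempty → P a ∈ B → B ⊆ a.ext →
        ∃ b : Tree3 X, b.ext = B ∧ P b = P a) ∧
      -- not TIIA
      ¬((∀ (t₁ t₂ t₃ : Tree3 X) (x y : X), P (Tree3.Node t₁ t₂ t₃) = x → P t₁ = y → y ≠ x →
          ∃ b : Tree3 X, b.ext = (t₁.ext \ {y}) ∪ {x} ∧ P (Tree3.Node b t₂ t₃) = x) ∧
        (∀ (t₁ t₂ t₃ : Tree3 X) (x y : X), P (Tree3.Node t₁ t₂ t₃) = x → P t₂ = y → y ≠ x →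
          ∃ b : Tree3 X, b.ext = (t₂.ext \ {y}) ∪ {x} ∧ P (Tree3.Node t₁ b t₃) = x) ∧
        (∀ (t₁ t₂ t₃ : Tree3 X) (x y : X), P (Tree3.Node t₁ t₂ t₃) = x → P t₃ = y → y ≠ x →
          ∃ b : Tree3 X, b.ext = (t₃.ext \ {y}) ∪ {x} ∧ P (Tree3.Node t₁ t₂ b) = x)) := by
  refine ⟨ℕ, inferInstance, myP, myP_mem, ?_, ?_⟩
  · -- αE
    intro a B hne hmem _
    by_cases hB : B = ({1} : Finset ℕ)
    · subst hB
      simp only [Finset.mem_singleton] at hmem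
      exact ⟨.Leaf 1, by simp [Tree3.ext], by simp [myP, hmem]⟩
    · obtain ⟨t, ht⟩ := exists_ext B hne
      refine ⟨.Node (.Leaf (myP a)) t t, ?_, ?_⟩
      · simp [Tree3.ext, ht, Finset.union_eq_right.mpr (Finset.singleton_subset_iff.mpr hmem)]
      · simp [myP, ht, hB]
  · -- ¬ TIIA
    rintro ⟨-, h2, -⟩
    -- t₁ = Leaf 1, t₂ = Node (Leaf 2) (Leaf 2) (Leaf 1), t₃ = Leaf 0, x = 1, y = 2
    obtain ⟨b, hb, hPb⟩ :=
      h2 (.Leaf 1) (.Node (.Leaf 2) (.Leaf 2) (.Leaf 1)) (.Leaf 0) 1 2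
        (by norm_num [myP, Tree3.ext]) (by norm_num [myP, Tree3.ext]) (by norm_num)
    have hb1 : b.ext = ({1} : Finset ℕ) := by
      rw [hb]; decide
    rw [myP, if_pos hb1] at hPb
    simp [myP] at hPb
end

section
/- Let P be a decision procedure on List2 X that is intensional (INT). Then P satisfies γ⁺-extended (γ⁺E). -/
variable {X : Type} [DecidableEq X]

set_option linter.unusedSectionVars false
set_option linter.unusedVariables false

namespace List2

def mapv (f : X → X) : List2 X → List2 X
  | .Sing2 v => .Sing2 (f v)
  | .Cat a b => .Cat (a.mapv f) (b.mapv f)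

lemma ext_mapv (f : X → X) : ∀ t : List2 X, (t.mapv f).ext = t.ext.image f
  | .Sing2 v => by simp [mapv, ext]
  | .Cat a b => by
      simp [mapv, ext, ext_mapv f a, ext_mapv f b, Finset.image_union]

lemma mapv_mapv (f g : X → X) : ∀ t : List2 X, (t.mapv g).mapv f = t.mapv (f ∘ g)
  | .Sing2 v => rfl
  | .Cat a b => by simp [mapv, mapv_mapv f g a, mapv_mapv f g b]

lemma subst_eq_mapv (u w : X) :
    ∀ t : List2 X, t.subst u w = t.mapv (fun z => if z = u then w else z)
  | .Sing2 v => rfl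
  | .Cat a b => by simp [subst, mapv, subst_eq_mapv u w a, subst_eq_mapv u w b]

lemma mapv_congr (f g : X → X) :
    ∀ t : List2 X, (∀ v ∈ t.ext, f v = g v) → t.mapv f = t.mapv g
  | .Sing2 v, h => by simp [mapv, h v (by simp [ext])]
  | .Cat a b, h => by
      simp only [mapv, Cat.injEq]
      exact ⟨mapv_congr f g a (fun v hv => h v (by simp [ext, hv])),
             mapv_congr f g b (fun v hv => h v (by simp [ext, hv]))⟩

lemma mapv_id : ∀ t : List2 X, t.mapv id = t
  | .Sing2 v => rfl
  | .Cat a b => by simp [mapv, mapv_id a, mapv_id b]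

def comb (h : X) : List X → List2 X
  | [] => .Sing2 h
  | v :: l => .Cat (.Sing2 h) (comb v l)

lemma ext_comb (h : X) : ∀ l : List X, (comb h l).ext = insert h l.toFinset
  | [] => by simp [comb, ext]
  | v :: l => by
      ext w
      simp [comb, ext, ext_comb v l]
      tauto

lemma mapv_comb (f : X → X) (h : X) :
    ∀ l : List X, (comb h l).mapv f = comb (f h) (l.map f)
  | [] => rfl
  | v :: l => by simp [comb, mapv, mapv_comb f v l]

end List2

namespace List2

lemma absorb (P : List2 X → X)
    (hINT : ∀ (a : List2 X) (x y : X), P a = x → P (a.subst x y) = y)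
    (s w : X) (hsw : s ≠ w) :
    ∀ vs : List X, s ∉ vs → ∀ t : List2 X, P t = w →
      (∀ v ∈ t.ext, v = s ∨ v = w ∨ v ∈ vs) →
      P (t.mapv (fun z => if z = s then z else w)) = w := by
  intro vs
  induction vs with
  | nil =>
    intro _ t ht hv
    have heq : t.mapv (fun z => if z = s then z else w) = t := by
      have h' : t.mapv (fun z => if z = s then z else w) = t.mapv id := by
        apply mapv_congr
        intro v hv'
        rcases hv v hv' with h | h | h
        · simp [h]
        · simp [h, hsw.symm]
        · simp at h
      rw [h', mapv_id]
    rwa [heq]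
  | cons v vs ih =>
    intro hs t ht hv
    have hsv : s ≠ v := fun h => hs (h ▸ (List.mem_cons_self (a := v) (l := vs)))
    have hsvs : s ∉ vs := fun h => hs (List.mem_cons_of_mem v h)
    have h1 : P (t.mapv (fun z => if z = w then v else z)) = v := by
      rw [← subst_eq_mapv]; exact hINT t w v ht
    have h2 : P ((t.mapv (fun z => if z = w then v else z)).mapv
        (fun z => if z = v then w else z)) = w := by
      rw [← subst_eq_mapv]; exact hINT _ v w h1
    rw [mapv_mapv] at h2
    have hres := ih hsvs (t.mapv ((fun z => if z = v then w else z) ∘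
        (fun z => if z = w then v else z))) h2 ?_
    · rw [mapv_mapv] at hres
      have hfun : ((fun z => if z = s then z else w) ∘
          ((fun z => if z = v then w else z) ∘ (fun z => if z = w then v else z)))
          = (fun z => if z = s then z else w) := by
        funext z
        simp only [Function.comp]
        by_cases hzw : z = w
        · subst hzw; simp [hsw.symm]
        · by_cases hzv : z = v
          · subst hzv; simp [Ne.symm hsv, hzw]
          · simp [hzw, hzv]
      rwa [hfun] at hres
    · intro u hu
      rw [ext_mapv] at hu
      rcases Finset.mem_image.mp hu with ⟨z, hz, rfl⟩
      simp only [Function.comp]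
      rcases hv z hz with h | h | h
      · subst h; left; simp [hsw, hsv]
      · subst h; right; left; simp
      · rcases List.mem_cons.mp h with h' | h'
        · subst h'; by_cases hzw : z = w <;> simp [hzw]
        · by_cases hzw : z = w
          · subst hzw; right; left; simp
          · by_cases hzv : z = v
            · subst hzv; right; left; simp
            · right; right; simpa [hzw, hzv] using h'

lemma cascade (P : List2 X → X)
    (hINT : ∀ (a : List2 X) (x y : X), P a = x → P (a.subst x y) = y)
    (s w : X) (hsw : s ≠ w) (t : List2 X) (ht : P t ≠ s) :
    P (t.mapv (fun z => if z = s then z else w)) = w := by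
  have h1 : P (t.mapv (fun z => if z = P t then w else z)) = w := by
    rw [← subst_eq_mapv]; exact hINT t (P t) w rfl
  have hcond : ∀ v ∈ (t.mapv (fun z => if z = P t then w else z)).ext,
      v = s ∨ v = w ∨ v ∈ t.ext.toList.filter (fun v => ¬ v = s) := by
    intro v hv
    rw [ext_mapv] at hv
    rcases Finset.mem_image.mp hv with ⟨z, hz, rfl⟩
    by_cases hzp : z = P t
    · right; left; simp [hzp]
    · rw [if_neg hzp]
      by_cases hzs : z = s
      · left; exact hzs
      · right; right
        simp [List.mem_filter, Finset.mem_toList, hz, hzs]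
  have hnotin : s ∉ t.ext.toList.filter (fun v => ¬ v = s) := by
    simp [List.mem_filter]
  have hres := absorb P hINT s w hsw _ hnotin _ h1 hcond
  rw [mapv_mapv] at hres
  have hfun : ((fun z => if z = s then z else w) ∘ (fun z => if z = P t then w else z))
      = (fun z => if z = s then z else w) := by
    funext z
    simp only [Function.comp]
    by_cases hz : z = P t
    · subst hz; simp [ht]
    · simp [hz]
  rwa [hfun] at hres

end List2

namespace List2

lemma force (P : List2 X → X) (hP : ∀ a : List2 X, P a ∈ a.ext)
    (hINT : ∀ (a : List2 X) (x y : X), P a = x → P (a.subst x y) = y)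
    (S : Finset X) (hcard : 3 ≤ S.card) (x : X) (hx : x ∈ S) :
    ∃ d : List2 X, d.ext = S ∧ P d = x := by
  by_contra hcon
  push_neg at hcon
  have h2 : 1 < (S.erase x).card := by
    rw [Finset.card_erase_of_mem hx]; omega
  obtain ⟨y, hy, z, hz, hyz⟩ := Finset.one_lt_card.mp h2
  have hyx : y ≠ x := (Finset.mem_erase.mp hy).1
  have hzx : z ≠ x := (Finset.mem_erase.mp hz).1
  set e : List X := (S.erase x).toList with he
  have hel : e.length = S.card - 1 := by
    rw [he, Finset.length_toList, Finset.card_erase_of_mem hx]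
  have hee : e.toFinset = S.erase x := by rw [he, Finset.toList_toFinset]
  have hex : ∀ v ∈ e, v ≠ x := by
    intro v hv
    have : v ∈ S.erase x := by rw [← hee]; exact List.mem_toFinset.mpr hv
    exact (Finset.mem_erase.mp this).1
  set k : ℕ := e.length with hk
  have hk2 : 2 ≤ k := by omega
  obtain ⟨e₀, e', he0⟩ : ∃ a l, e = a :: l := by
    cases hE : e with
    | nil => exfalso; rw [hE] at hk; simp [hk] at hk2
    | cons a l => exact ⟨a, l, rfl⟩
  have he0x : e₀ ≠ x := hex e₀ (by rw [he0]; exact List.mem_cons_self)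
  have he'x : ∀ v ∈ e', v ≠ x := fun v hv => hex v (by rw [he0]; exact List.mem_cons_of_mem _ hv)
  have he'l : e'.length = k - 1 := by
    have : e.length = e'.length + 1 := by rw [he0]; simp
    omega
  set t0 : List2 X := comb y (List.replicate (k-1) y ++ List.replicate k z) with ht0
  -- common pieces
  have hzy : z ≠ y := hyz.symm
  by_cases hq : P t0 = y
  · -- use z-side
    have hqz : P t0 ≠ z := by rw [hq]; exact hyz
    have hc1 : P (t0.mapv (fun v => if v = z then v else x)) = x :=
      cascade P hINT z x hzx t0 hqz
    have htau : t0.mapv (fun v => if v = z then v else x)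
        = comb x (List.replicate (k-1) x ++ List.replicate k z) := by
      rw [ht0, mapv_comb, List.map_append, List.map_replicate, List.map_replicate]
      simp [hyz]
    set u2 : List2 X := comb x (List.replicate (k-1) x ++ e) with hu2
    have hu2ext : u2.ext = S := by
      rw [hu2, ext_comb]
      ext v
      simp only [List.toFinset_append, Finset.mem_insert, Finset.mem_union,
        List.mem_toFinset, List.mem_replicate, hee, Finset.mem_erase]
      constructor
      · rintro (rfl | ⟨⟨_, rfl⟩ | ⟨_, hvS⟩⟩)
        · exact hx
        · exact hx
        · exact hvS
      · intro hvS
        by_cases hvx : v = x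
        · exact Or.inl hvx
        · exact Or.inr (Or.inr ⟨hvx, hvS⟩)
    have hu2P : P u2 ≠ x := hcon u2 hu2ext
    have hc2 : P (u2.mapv (fun v => if v = x then v else z)) = z :=
      cascade P hINT x z (fun h => hzx h.symm) u2 hu2P
    have heq2 : u2.mapv (fun v => if v = x then v else z)
        = comb x (List.replicate (k-1) x ++ List.replicate k z) := by
      rw [hu2, mapv_comb, List.map_append, List.map_replicate]
      congr 1
      · simp
      · congr 1
        · simp
        · apply List.eq_replicate_iff.mpr
          constructor
          · simp [hk]
          · intro b hb
            rcases List.mem_map.mp hb with ⟨v, hv, rfl⟩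
            simp [hex v hv]
    rw [heq2] at hc2
    rw [htau] at hc1
    rw [hc1] at hc2
    exact hzx hc2.symm
  · -- use y-side
    have hc1 : P (t0.mapv (fun v => if v = y then v else x)) = x :=
      cascade P hINT y x hyx t0 hq
    have htau : t0.mapv (fun v => if v = y then v else x)
        = comb y (List.replicate (k-1) y ++ List.replicate k x) := by
      rw [ht0, mapv_comb, List.map_append, List.map_replicate, List.map_replicate]
      simp [hyz, hzy]
    set u1 : List2 X := comb e₀ (e' ++ List.replicate k x) with hu1
    have hu1ext : u1.ext = S := by
      rw [hu1, ext_comb]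
      ext v
      simp only [List.toFinset_append, Finset.mem_insert, Finset.mem_union,
        List.mem_toFinset, List.mem_replicate]
      constructor
      · rintro (hve | (hv | ⟨_, rfl⟩))
        · have he0S : e₀ ∈ S.erase x := by
            rw [← hee, he0]; exact List.mem_toFinset.mpr List.mem_cons_self
          rw [hve]; exact Finset.mem_of_mem_erase he0S
        · have : v ∈ S.erase x := by
            rw [← hee, he0]; exact List.mem_toFinset.mpr (List.mem_cons_of_mem _ hv)
          exact Finset.mem_of_mem_erase this
        · exact hx
      · intro hvS
        by_cases hvx : v = x
        · right; right; constructor; omega; exact hvx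
        · have : v ∈ e.toFinset := by rw [hee]; exact Finset.mem_erase.mpr ⟨hvx, hvS⟩
          rw [he0] at this
          rcases List.mem_cons.mp (List.mem_toFinset.mp this) with h | h
          · exact Or.inl h
          · exact Or.inr (Or.inl h)
    have hu1P : P u1 ≠ x := hcon u1 hu1ext
    have hc2 : P (u1.mapv (fun v => if v = x then v else y)) = y :=
      cascade P hINT x y (fun h => hyx h.symm) u1 hu1P
    have heq2 : u1.mapv (fun v => if v = x then v else y)
        = comb y (List.replicate (k-1) y ++ List.replicate k x) := by
      rw [hu1, mapv_comb, List.map_append, List.map_replicate]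
      congr 1
      · simp [he0x]
      · congr 1
        · apply List.eq_replicate_iff.mpr
          constructor
          · simp [he'l]
          · intro b hb
            rcases List.mem_map.mp hb with ⟨v, hv, rfl⟩
            simp [he'x v hv]
        · simp
    rw [heq2] at hc2
    rw [htau] at hc1
    rw [hc1] at hc2
    exact hyx hc2.symm

end List2


/-- An intensional decision procedure on `List2 X` satisfies
γ⁺-extended. -/
theorem stmt_12 {X : Type} [DecidableEq X] (P : List2 X → X)
    (hP : ∀ a : List2 X, P a ∈ a.ext)
    (hINT : ∀ (a : List2 X) (x y : X), P a = x → P (a.subst x y) = y) :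
    ∀ a b : List2 X, P b ∈ a.ext →
      ∃ d : List2 X, d.ext = a.ext ∪ b.ext ∧ P d = P a := by
  intro a b hab
  by_cases hba : b.ext ⊆ a.ext
  · exact ⟨a, by rw [Finset.union_eq_left.mpr hba], rfl⟩
  · by_cases hcard : a.ext.card ≤ 1
    · -- ext a = {P a}
      have hsing : a.ext = {P a} := by
        apply Finset.eq_singleton_iff_unique_mem.mpr
        exact ⟨hP a, fun v hv => Finset.card_le_one.mp hcard v hv (P a) (hP a)⟩
      have hPb : P b = P a := by
        rw [hsing] at hab; exact Finset.mem_singleton.mp hab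
      refine ⟨b, ?_, hPb⟩
      rw [Finset.union_eq_right.mpr]
      rw [hsing, ← hPb]
      exact Finset.singleton_subset_iff.mpr (hP b)
    · obtain ⟨w, hw1, hw2⟩ := Finset.not_subset.mp hba
      have hsub : insert w a.ext ⊆ a.ext ∪ b.ext :=
        Finset.insert_subset (Finset.mem_union_right _ hw1) Finset.subset_union_left
      have h3 : 3 ≤ (a.ext ∪ b.ext).card := by
        have := Finset.card_le_card hsub
        rw [Finset.card_insert_of_notMem hw2] at this
        omega
      exact List2.force P hP hINT _ h3 (P a) (Finset.mem_union_left _ (hP a))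
end

section
/- Let P be a decision procedure on List2 X that is strongly inductive (SIND). Then P satisfies γ⁺-extended (γ⁺E). -/
variable {X : Type} [DecidableEq X]

/-- A strongly inductive decision procedure on `List2 X` satisfies
γ⁺-extended. -/
theorem stmt_13 {X : Type} [DecidableEq X] (P : List2 X → X)
    (hP : ∀ a : List2 X, P a ∈ a.ext)
    (hSIND : ∀ x y : X,
      (∀ a b : List2 X, P a = x → P b = y → P (List2.Cat a b) = x) ∨
      (∀ a b : List2 X, P a = x → P b = y → P (List2.Cat a b) = y)) :
    ∀ a b : List2 X, P b ∈ a.ext →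
      ∃ d : List2 X, d.ext = a.ext ∪ b.ext ∧ P d = P a := by
  intro a
  induction a with
  | Sing2 x =>
    intro b hb
    simp only [List2.ext, Finset.mem_singleton] at hb
    have hx : P (List2.Sing2 x) = x := by
      have := hP (List2.Sing2 x)
      simpa [List2.ext] using this
    refine ⟨List2.Cat (List2.Sing2 x) b, rfl, ?_⟩
    rcases hSIND x x with h | h
    · rw [h _ _ hx hb]; exact hx.symm
    · rw [h _ _ hx hb]; exact hx.symm
  | Cat a1 a2 ih1 ih2 =>
    intro b hb
    simp only [List2.ext, Finset.mem_union] at hb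
    rcases hb with hb | hb
    · obtain ⟨d1, hd1, hPd1⟩ := ih1 b hb
      refine ⟨List2.Cat d1 a2, ?_, ?_⟩
      · simp only [List2.ext, hd1]
        ac_rfl
      · rcases hSIND (P a1) (P a2) with h | h
        · rw [h _ _ hPd1 rfl, h _ _ rfl rfl]
        · rw [h _ _ hPd1 rfl, h _ _ rfl rfl]
    · obtain ⟨d2, hd2, hPd2⟩ := ih2 b hb
      refine ⟨List2.Cat a1 d2, ?_, ?_⟩
      · simp only [List2.ext, hd2]
        ac_rfl
      · rcases hSIND (P a1) (P a2) with h | h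
        · rw [h _ _ rfl hPd2, h _ _ rfl rfl]
        · rw [h _ _ rfl hPd2, h _ _ rfl rfl]
end

section
/- There exist a type X and a decision procedure P on List2 X such that P is extensional (EXT) but does not satisfy γ⁺-extended (γ⁺E). (For example, the choose-default-on-large-problems procedure: fix a linear order on X, a default element x* : X and a threshold N; return x* whenever x* ∈ ⟦a⟧ and |⟦a⟧| > N, and otherwise return the maximum of ⟦a⟧.) -/
variable {X : Type} [DecidableEq X]

/-- There are a type `X` and a decision procedure `P` on `List2 X`
that is extensional but does not satisfy γ⁺-extended. -/
theorem stmt_15 : ∃ (X : Type) (inst : DecidableEq X),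
    letI := inst
    ∃ P : List2 X → X,
      (∀ a : List2 X, P a ∈ a.ext) ∧
      -- EXT
      (∀ a b : List2 X, a.ext = b.ext → P a = P b) ∧
      -- not γ⁺E
      ¬(∀ a b : List2 X, P b ∈ a.ext →
        ∃ d : List2 X, d.ext = a.ext ∪ b.ext ∧ P d = P a) := by
  refine ⟨Fin 3, inferInstance, fun a =>
    if a.ext = ({0, 1, 2} : Finset (Fin 3)) then 0 else a.ext.max' a.ext_nonempty,
    ?_, ?_, ?_⟩
  · intro a
    by_cases h : a.ext = ({0, 1, 2} : Finset (Fin 3))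
    · simp [h]
    · simp [h, Finset.max'_mem]
  · intro a b hab
    simp [hab]
  · intro H
    obtain ⟨d, hd, hPd⟩ := H (.Cat (.Sing2 1) (.Sing2 2)) (.Cat (.Sing2 0) (.Sing2 2)) (by decide)
    have h1 : (List2.Cat (List2.Sing2 1) (List2.Sing2 2) : List2 (Fin 3)).ext
        ∪ (List2.Cat (List2.Sing2 0) (List2.Sing2 2) : List2 (Fin 3)).ext
        = ({0, 1, 2} : Finset (Fin 3)) := by decide
    rw [h1] at hd
    simp only at hPd
    rw [if_pos hd] at hPd
    rw [if_neg (by decide)] at hPd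
    revert hPd
    decide
end

section
/- There exist a type X and a decision procedure P on Tree X such that P is strongly inductive (SIND) but does not satisfy T-independence of irrelevant alternatives (TIIA). (For example, take X = {x, y, z} with the cyclic relation x ≻ y, y ≻ z, z ≻ x, and let P(Leaf x) = x and P(Node t₁ t₂ t₃) be the ≻-maximal element among P(t₁), P(t₂), P(t₃).) -/
/-- Cyclic winner on `Fin 3`: `a` beats `a+1`. -/
def w3 (a b : Fin 3) : Fin 3 := if b = a + 1 then a else b

lemma w3_mem (a b : Fin 3) : w3 a b = a ∨ w3 a b = b := by
  unfold w3; split <;> simp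

/-- Decision procedure. -/
def P3 : Tree3 (Fin 3) → Fin 3
  | .Leaf x => x
  | .Node t₁ t₂ t₃ => w3 (w3 (P3 t₁) (P3 t₂)) (P3 t₃)

lemma P3_mem : ∀ a : Tree3 (Fin 3), P3 a ∈ a.ext := by
  intro a
  induction a with
  | Leaf x => simp [P3, Tree3.ext]
  | Node t₁ t₂ t₃ ih₁ ih₂ ih₃ =>
    simp only [P3, Tree3.ext, Finset.mem_union]
    rcases w3_mem (w3 (P3 t₁) (P3 t₂)) (P3 t₃) with h | h
    · rw [h]
      rcases w3_mem (P3 t₁) (P3 t₂) with h' | h' <;> rw [h']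
      · exact Or.inl (Or.inl ih₁)
      · exact Or.inl (Or.inr ih₂)
    · rw [h]; exact Or.inr ih₃

/-- There are a type `X` and a decision procedure `P` on `Tree3 X`
that is strongly inductive but does not satisfy T-independence of irrelevant
alternatives. -/

theorem stmt_16 : ∃ (X : Type) (inst : DecidableEq X),
    letI := inst
    ∃ P : Tree3 X → X,
      (∀ a : Tree3 X, P a ∈ a.ext) ∧
      -- SIND
      (∀ x₁ x₂ x₃ : X,
        (∀ t₁ t₂ t₃ : Tree3 X, P t₁ = x₁ → P t₂ = x₂ → P t₃ = x₃ →
          P (Tree3.Node t₁ t₂ t₃) = x₁) ∨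
        (∀ t₁ t₂ t₃ : Tree3 X, P t₁ = x₁ → P t₂ = x₂ → P t₃ = x₃ →
          P (Tree3.Node t₁ t₂ t₃) = x₂) ∨
        (∀ t₁ t₂ t₃ : Tree3 X, P t₁ = x₁ → P t₂ = x₂ → P t₃ = x₃ →
          P (Tree3.Node t₁ t₂ t₃) = x₃)) ∧
      -- not TIIA
      ¬((∀ (t₁ t₂ t₃ : Tree3 X) (x y : X), P (Tree3.Node t₁ t₂ t₃) = x → P t₁ = y → y ≠ x →
          ∃ b : Tree3 X, b.ext = (t₁.ext \ {y}) ∪ {x} ∧ P (Tree3.Node b t₂ t₃) = x) ∧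
        (∀ (t₁ t₂ t₃ : Tree3 X) (x y : X), P (Tree3.Node t₁ t₂ t₃) = x → P t₂ = y → y ≠ x →
          ∃ b : Tree3 X, b.ext = (t₂.ext \ {y}) ∪ {x} ∧ P (Tree3.Node t₁ b t₃) = x) ∧
        (∀ (t₁ t₂ t₃ : Tree3 X) (x y : X), P (Tree3.Node t₁ t₂ t₃) = x → P t₃ = y → y ≠ x →
          ∃ b : Tree3 X, b.ext = (t₃.ext \ {y}) ∪ {x} ∧ P (Tree3.Node t₁ t₂ b) = x)) := by
  
  refine ⟨Fin 3, inferInstance, P3, P3_mem, ?_, ?_⟩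
  · intro x₁ x₂ x₃
    have h : w3 (w3 x₁ x₂) x₃ = x₁ ∨ w3 (w3 x₁ x₂) x₃ = x₂ ∨ w3 (w3 x₁ x₂) x₃ = x₃ := by
      rcases w3_mem (w3 x₁ x₂) x₃ with h | h
      · rcases w3_mem x₁ x₂ with h' | h' <;> rw [h, h']
        · exact Or.inl rfl
        · exact Or.inr (Or.inl rfl)
      · exact Or.inr (Or.inr h)
    rcases h with h | h | h
    · left; intro t₁ t₂ t₃ h₁ h₂ h₃; simp [P3, h₁, h₂, h₃, h]
    · right; left; intro t₁ t₂ t₃ h₁ h₂ h₃; simp [P3, h₁, h₂, h₃, h]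
    · right; right; intro t₁ t₂ t₃ h₁ h₂ h₃; simp [P3, h₁, h₂, h₃, h]
  · rintro ⟨h1, -, -⟩
    have hnode : P3 (Tree3.Node (.Leaf 0) (.Leaf 1) (.Leaf 2)) = 2 := by decide
    obtain ⟨b, hb, hPb⟩ := h1 (.Leaf 0) (.Leaf 1) (.Leaf 2) 2 0 hnode rfl (by decide)
    have hext : b.ext = {2} := by
      rw [hb]; decide
    have hPb2 : P3 b = 2 := by
      have := P3_mem b
      rw [hext] at this
      simpa using this
    rw [show P3 (Tree3.Node b (.Leaf 1) (.Leaf 2)) = w3 (w3 (P3 b) 1) 2 from rfl,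
      hPb2] at hPb
    exact absurd hPb (by decide)
end

section
/- Let P be a decision procedure on List2 X that is intensional (INT). Then the choice correspondence C_P is rationalizable, i.e. there exists a complete and transitive relation ⪰ on X such that for every nonempty finite A : Finset X, C_P(A) = {x ∈ A : ∀ y ∈ A, x ⪰ y}. -/
variable {X : Type} [DecidableEq X]

namespace Stmt18Aux

/-- Right comb tree with leaves `h :: tl`. -/
def comb : X → List X → List2 X
  | h, [] => .Sing2 h
  | h, a :: tl => .Cat (.Sing2 h) (comb a tl)

lemma ext_comb (h : X) (tl : List X) : (comb h tl).ext = (h :: tl).toFinset := by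
  induction tl generalizing h with
  | nil => simp [comb, List2.ext]
  | cons a tl ih =>
      rw [comb, List2.ext, ih]
      ext z
      simp [List2.ext]
      tauto

lemma subst_comb (x y : X) (h : X) (tl : List X) :
    (comb h tl).subst x y =
      comb (if h = x then y else h) (tl.map fun a => if a = x then y else a) := by
  induction tl generalizing h with
  | nil => simp [comb, List2.subst]
  | cons a tl ih => simp [comb, List2.subst, ih]

lemma map_eq_replicate {l : List X} {f : X → X} {w : X} (hf : ∀ a ∈ l, f a = w) :
    l.map f = List.replicate l.length w := by
  induction l with
  | nil => simp
  | cons a l ih => simp_all [List.replicate_succ]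

lemma map_eq_self {l : List X} {f : X → X} (hf : ∀ a ∈ l, f a = a) : l.map f = l := by
  induction l with
  | nil => simp
  | cons a l ih => simp_all

/-- Collapse lemma: if the choice from a comb is not `x`, then collapsing all non-`x`
labels to a single value `w` yields a comb whose choice is `w`. -/
lemma collapse (P : List2 X → X) (hP : ∀ a : List2 X, P a ∈ a.ext)
    (hINT : ∀ (a : List2 X) (x y : X), P a = x → P (a.subst x y) = y)
    (x : X) : ∀ (n : ℕ) (h : X) (tl : List X) (z : X),
    ((h :: tl).toFinset.erase x).card ≤ n → P (comb h tl) = z → z ≠ x →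
    ∃ w, w ≠ x ∧
      P (comb (if h = x then x else w) (tl.map fun a => if a = x then x else w)) = w := by
  intro n
  induction n with
  | zero =>
      intro h tl z hcard hpz hzx
      exfalso
      have hzmem : z ∈ (h :: tl).toFinset := by
        have := hP (comb h tl)
        rw [ext_comb, hpz] at this
        exact this
      have : z ∈ (h :: tl).toFinset.erase x := Finset.mem_erase.2 ⟨hzx, hzmem⟩
      have := Finset.card_pos.2 ⟨z, this⟩
      omega
  | succ n ih =>
      intro h tl z hcard hpz hzx
      have hzmem : z ∈ (h :: tl).toFinset := by
        have := hP (comb h tl)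
        rw [ext_comb, hpz] at this
        exact this
      by_cases hall : ∀ a ∈ h :: tl, a = x ∨ a = z
      · refine ⟨z, hzx, ?_⟩
        have h1 : (if h = x then x else z) = h := by
          rcases hall h List.mem_cons_self with h' | h' <;> subst h' <;> simp [hzx]
        have h2 : (tl.map fun a => if a = x then x else z) = tl := by
          apply map_eq_self
          intro a ha
          rcases hall a (List.mem_cons_of_mem h ha) with h' | h' <;> subst h' <;> simp [hzx]
        rw [h1, h2]
        exact hpz
      · push_neg at hall
        obtain ⟨w', hw'mem, hw'x, hw'z⟩ := hall
        have hint := hINT (comb h tl) z w' hpz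
        rw [subst_comb] at hint
        set s : X → X := fun a => if a = z then w' else a with hs
        have hmapcons : (if h = z then w' else h) :: (tl.map fun a => if a = z then w' else a)
            = (h :: tl).map s := by simp [hs]
        have hw'TF : w' ∈ (h :: tl).toFinset := List.mem_toFinset.2 hw'mem
        have hsub : (((h :: tl).map s).toFinset.erase x) ⊆
            (((h :: tl).toFinset.erase x).erase z) := by
          intro a ha
          rw [Finset.mem_erase] at ha
          obtain ⟨hax, hamem⟩ := ha
          rw [List.mem_toFinset, List.mem_map] at hamem
          obtain ⟨b, hb, hba⟩ := hamem
          rw [← List.mem_toFinset] at hb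
          rw [Finset.mem_erase, Finset.mem_erase]
          by_cases hbz : b = z
          · subst hbz
            have : a = w' := by simp [hs, ← hba]
            subst this
            exact ⟨hw'z, hax, hw'TF⟩
          · have : a = b := by simp [hs, ← hba, hbz]
            subst this
            exact ⟨hbz, hax, hb⟩
        have hzin : z ∈ (h :: tl).toFinset.erase x := Finset.mem_erase.2 ⟨hzx, hzmem⟩
        have hcard' : (((h :: tl).map s).toFinset.erase x).card ≤ n := by
          have h1 := Finset.card_le_card hsub
          rw [Finset.card_erase_of_mem hzin] at h1
          have h2 := Finset.card_pos.2 ⟨z, hzin⟩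
          omega
        have hcard'' : (((if h = z then w' else h) ::
            (tl.map fun a => if a = z then w' else a)).toFinset.erase x).card ≤ n := by
          rw [hmapcons]; exact hcard'
        obtain ⟨w, hwx, hw⟩ := ih (if h = z then w' else h)
          (tl.map fun a => if a = z then w' else a) w' hcard'' hint hw'x
        refine ⟨w, hwx, ?_⟩
        have hh : (if (if h = z then w' else h) = x then x else w) = (if h = x then x else w) := by
          by_cases hhz : h = z
          · simp [hhz, hw'x, hzx]
          · simp [hhz]
        have htl : ((tl.map fun a => if a = z then w' else a).map fun a => if a = x then x else w)
            = tl.map fun a => if a = x then x else w := by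
          rw [List.map_map]
          apply List.map_congr_left
          intro a _
          by_cases haz : a = z
          · simp [haz, hw'x, hzx]
          · simp [haz]
        rw [hh, htl] at hw
        exact hw

/-- Two-block comb pattern: `m+1` copies of `u` followed by `m+1` copies of `v`. -/
def Qp (m : ℕ) (u v : X) : List2 X :=
  comb u (List.replicate m u ++ List.replicate (m + 1) v)

lemma ext_Qp (m : ℕ) (u v : X) : (Qp m u v).ext = {u, v} := by
  rw [Qp, ext_comb]
  ext a
  simp [List.mem_replicate]
  tauto

lemma subst_Qp (m : ℕ) (u v x y : X) :
    (Qp m u v).subst x y = Qp m (if u = x then y else u) (if v = x then y else v) := by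
  simp [Qp, subst_comb, List.map_replicate]

lemma mem_Qp (P : List2 X → X) (hP : ∀ a : List2 X, P a ∈ a.ext)
    (m : ℕ) (u v : X) : P (Qp m u v) = u ∨ P (Qp m u v) = v := by
  have := hP (Qp m u v)
  rw [ext_Qp] at this
  simpa using this

/-- Value-independence: if in the two-block pattern the first block ever wins,
it always wins (needs three distinct elements in `X`). -/
lemma W_left (P : List2 X → X) (hP : ∀ a : List2 X, P a ∈ a.ext)
    (hINT : ∀ (a : List2 X) (x y : X), P a = x → P (a.subst x y) = y)
    (p q r : X) (hpq : p ≠ q) (hpr : p ≠ r) (hqr : q ≠ r)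
    (m : ℕ) (a b : X) (hab : a ≠ b) (H : P (Qp m a b) = a) :
    ∀ u v, u ≠ v → P (Qp m u v) = u := by
  have C1 : ∀ u v c : X, u ≠ v → P (Qp m u v) = u → P (Qp m c v) = c := by
    intro u v c huv h
    have := hINT (Qp m u v) u c h
    rw [subst_Qp] at this
    simpa [huv.symm] using this
  have C2 : ∀ u v c : X, u ≠ v → P (Qp m u v) = v → P (Qp m u c) = c := by
    intro u v c huv h
    have := hINT (Qp m u v) v c h
    rw [subst_Qp] at this
    simpa [huv] using this
  intro u v huv
  by_contra hnL
  have hval : P (Qp m u v) = v := (mem_Qp P hP m u v).resolve_left hnL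
  by_cases hub : u = b
  · subst hub
    obtain ⟨c, d, hcb, hdb, hcd⟩ : ∃ c d : X, c ≠ u ∧ d ≠ u ∧ c ≠ d := by
      by_cases hbp : u = p
      · subst hbp
        exact ⟨q, r, fun h => hpq h.symm, fun h => hpr h.symm, hqr⟩
      · by_cases hbq : u = q
        · subst hbq
          exact ⟨p, r, hpq, fun h => hqr h.symm, hpr⟩
        · exact ⟨p, q, fun h => hbp h.symm, fun h => hbq h.symm, hpq⟩
    rcases mem_Qp P hP m c d with hc | hd
    · have h1 : P (Qp m u d) = u := C1 c d u hcd hc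
      have h2 : P (Qp m u d) = d := C2 u v d huv hval
      exact hdb (h2.symm.trans h1)
    · have h1 : P (Qp m c u) = u := C2 c d u hcd hd
      have h2 : P (Qp m c u) = c := C1 a u c hab H
      exact hcb (h2.symm.trans h1)
  · have h1 : P (Qp m u b) = u := C1 a b u hab H
    have h2 : P (Qp m u b) = b := C2 u v b huv hval
    exact hub (h1.symm.trans h2)

/-- Main construction: with at least three distinct elements, every element of `A`
is chosen from some problem with extension `A`. -/
lemma exists_witness (P : List2 X → X) (hP : ∀ a : List2 X, P a ∈ a.ext)
    (hINT : ∀ (a : List2 X) (x y : X), P a = x → P (a.subst x y) = y)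
    (p q r : X) (hpq : p ≠ q) (hpr : p ≠ r) (hqr : q ≠ r)
    (A : Finset X) (x : X) (hx : x ∈ A) :
    ∃ a : List2 X, a.ext = A ∧ P a = x := by
  rcases Finset.eq_empty_or_nonempty (A.erase x) with hB | hB
  · have hA : A = {x} := by
      rcases (Finset.erase_eq_empty_iff A x).1 hB with h | h
      · exact absurd (h ▸ hx) (Finset.notMem_empty x)
      · exact h
    refine ⟨.Sing2 x, by simp [List2.ext, hA], ?_⟩
    have := hP (.Sing2 x)
    simpa [List2.ext] using this
  · obtain ⟨b, bs', hbs⟩ : ∃ b bs', (A.erase x).toList = b :: bs' := by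
      cases h : (A.erase x).toList with
      | nil => exact absurd (Finset.toList_eq_nil.1 h) hB.ne_empty
      | cons b bs' => exact ⟨b, bs', rfl⟩
    have hTF : (b :: bs').toFinset = A.erase x := by
      rw [← hbs]; exact Finset.toList_toFinset _
    have hmem2 : ∀ a, (a = b ∨ a ∈ bs') ↔ a ∈ A.erase x := by
      intro a
      rw [← hTF]
      simp
    have hnx : ∀ a, (a = b ∨ a ∈ bs') → a ≠ x := by
      intro a ha
      exact (Finset.mem_erase.1 ((hmem2 a).1 ha)).1
    set m' := bs'.length with hm'
    set L1 : List2 X := comb x (List.replicate m' x ++ (b :: bs')) with hL1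
    set L2 : List2 X := comb b (bs' ++ List.replicate (m' + 1) x) with hL2
    have hins : insert x (A.erase x) = A := Finset.insert_erase hx
    have hext1 : L1.ext = A := by
      rw [hL1, ext_comb, ← hins]
      ext a
      have h2 := hmem2 a
      rw [Finset.mem_insert] at *
      simp only [List.toFinset_cons, List.toFinset_append, Finset.mem_insert,
        Finset.mem_union, List.mem_toFinset, List.mem_replicate]
      tauto
    have hext2 : L2.ext = A := by
      rw [hL2, ext_comb, ← hins]
      ext a
      have h2 := hmem2 a
      have h3 : m' + 1 ≠ 0 := Nat.succ_ne_zero _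
      rw [Finset.mem_insert] at *
      simp only [List.toFinset_cons, List.toFinset_append, Finset.mem_insert,
        Finset.mem_union, List.mem_toFinset, List.mem_replicate]
      tauto
    by_cases h1 : P L1 = x
    · exact ⟨L1, hext1, h1⟩
    by_cases h2 : P L2 = x
    · exact ⟨L2, hext2, h2⟩
    exfalso
    obtain ⟨w1, hw1x, hcol1⟩ := collapse P hP hINT x
      (((x :: (List.replicate m' x ++ (b :: bs'))).toFinset.erase x).card)
      x (List.replicate m' x ++ (b :: bs')) (P L1) le_rfl rfl h1
    have he1 : (comb (if x = x then x else w1)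
        ((List.replicate m' x ++ (b :: bs')).map fun a => if a = x then x else w1))
        = Qp m' x w1 := by
      rw [Qp]
      congr 1
      · simp
      · rw [List.map_append]
        congr 1
        · rw [List.map_replicate]; simp
        · apply map_eq_replicate
          intro a ha
          simp [hnx a (List.mem_cons.1 ha)]
    rw [he1] at hcol1
    obtain ⟨w2, hw2x, hcol2⟩ := collapse P hP hINT x
      (((b :: (bs' ++ List.replicate (m' + 1) x)).toFinset.erase x).card)
      b (bs' ++ List.replicate (m' + 1) x) (P L2) le_rfl rfl h2
    have he2 : (comb (if b = x then x else w2)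
        ((bs' ++ List.replicate (m' + 1) x).map fun a => if a = x then x else w2))
        = Qp m' w2 x := by
      rw [Qp]
      congr 1
      · simp [hnx b (Or.inl rfl)]
      · rw [List.map_append]
        congr 1
        · apply map_eq_replicate
          intro a ha
          simp [hnx a (Or.inr ha)]
        · rw [List.map_replicate]; simp
    rw [he2] at hcol2
    have := W_left P hP hINT p q r hpq hpr hqr m' w2 x hw2x hcol2 x w1
      (fun h => hw1x h.symm)
    rw [hcol1] at this
    exact hw1x this

end Stmt18Aux

/-- For an intensional decision procedure on `List2 X`, the choice
correspondence `C_P` is rationalizable by a complete and transitive relation. -/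
theorem stmt_18 {X : Type} [DecidableEq X] (P : List2 X → X)
    (hP : ∀ a : List2 X, P a ∈ a.ext)
    (hINT : ∀ (a : List2 X) (x y : X), P a = x → P (a.subst x y) = y) :
    ∃ R : X → X → Prop, (∀ x y : X, R x y ∨ R y x) ∧ Transitive R ∧
      ∀ A : Finset X, A.Nonempty →
        {x : X | ∃ a : List2 X, a.ext = A ∧ P a = x} =
          {x : X | x ∈ A ∧ ∀ y ∈ A, R x y} := by
  classical
  by_cases hsmall : ∀ u v w : X, u = v ∨ u = w ∨ v = w
  · -- X has at most two elements
    refine ⟨fun u v => u = v ∨ ∃ a : List2 X, a.ext = {u, v} ∧ P a = u, ?_, ?_, ?_⟩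
    · intro u v
      by_cases huv : u = v
      · exact Or.inl (Or.inl huv)
      · have hpair : (List2.Cat (.Sing2 u) (.Sing2 v)).ext = {u, v} := by
          ext a; simp [List2.ext]
        have := hP (List2.Cat (.Sing2 u) (.Sing2 v))
        rw [hpair] at this
        rcases Finset.mem_insert.1 this with h | h
        · exact Or.inl (Or.inr ⟨_, hpair, h⟩)
        · have h' : P (List2.Cat (.Sing2 u) (.Sing2 v)) = v := Finset.mem_singleton.1 h
          exact Or.inr (Or.inr ⟨_, by rw [hpair, Finset.pair_comm], h'⟩)
    · intro u v w huv hvw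
      rcases hsmall u v w with he | he | he
      · subst he; exact hvw
      · exact Or.inl he
      · subst he; exact huv
    · intro A hA
      ext z
      simp only [Set.mem_setOf_eq]
      constructor
      · rintro ⟨a, ha, hz⟩
        have hzA : z ∈ A := by rw [← ha, ← hz]; exact hP a
        refine ⟨hzA, fun y hy => ?_⟩
        by_cases hzy : z = y
        · exact Or.inl hzy
        · have hAzy : A = {z, y} := by
            ext w
            constructor
            · intro hw
              rcases hsmall w z y with h | h | h
              · exact Finset.mem_insert.2 (Or.inl h)
              · exact Finset.mem_insert.2 (Or.inr (Finset.mem_singleton.2 h))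
              · exact absurd h hzy
            · intro hw
              rcases Finset.mem_insert.1 hw with h | h
              · exact h ▸ hzA
              · exact (Finset.mem_singleton.1 h) ▸ hy
          exact Or.inr ⟨a, ha.trans hAzy, hz⟩
      · rintro ⟨hzA, hR⟩
        by_cases hA1 : ∀ y ∈ A, y = z
        · have hAz : A = {z} := by
            ext w
            exact ⟨fun hw => Finset.mem_singleton.2 (hA1 w hw),
              fun hw => (Finset.mem_singleton.1 hw) ▸ hzA⟩
          refine ⟨.Sing2 z, by simp [List2.ext, hAz], ?_⟩
          have := hP (.Sing2 z)
          simpa [List2.ext] using this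
        · push_neg at hA1
          obtain ⟨y, hy, hyz⟩ := hA1
          have hAzy : A = {z, y} := by
            ext w
            constructor
            · intro hw
              rcases hsmall w z y with h | h | h
              · exact Finset.mem_insert.2 (Or.inl h)
              · exact Finset.mem_insert.2 (Or.inr (Finset.mem_singleton.2 h))
              · exact absurd h.symm hyz
            · intro hw
              rcases Finset.mem_insert.1 hw with h | h
              · exact h ▸ hzA
              · exact (Finset.mem_singleton.1 h) ▸ hy
          rcases hR y hy with h | h
          · exact absurd h.symm hyz
          · obtain ⟨a, ha, hpa⟩ := h
            exact ⟨a, ha.trans hAzy.symm, hpa⟩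
  · -- X has at least three distinct elements
    push_neg at hsmall
    obtain ⟨p, q, r, hpq, hpr, hqr⟩ := hsmall
    refine ⟨fun _ _ => True, fun _ _ => Or.inl trivial, fun _ _ _ _ _ => trivial, ?_⟩
    intro A hA
    ext z
    simp only [Set.mem_setOf_eq]
    constructor
    · rintro ⟨a, ha, hz⟩
      exact ⟨by rw [← ha, ← hz]; exact hP a, fun _ _ => trivial⟩
    · rintro ⟨hzA, -⟩
      exact Stmt18Aux.exists_witness P hP hINT p q r hpq hpr hqr A z hzA
end

section
/- Let P be a decision procedure on List2 X that is strongly inductive (SIND) and satisfies T-independence of irrelevant alternatives (TIIA). Then the choice correspondence C_P is rationalizable, i.e. there exists a complete and transitive relation ⪰ on X such that for every nonempty finite A : Finset X, C_P(A) = {x ∈ A : ∀ y ∈ A, x ⪰ y}. -/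
variable {X : Type} [DecidableEq X]

@[simp] lemma List2.ext_sing (x : X) : (List2.Sing2 x).ext = {x} := rfl
@[simp] lemma List2.ext_cat (a b : List2 X) : (List2.Cat a b).ext = a.ext ∪ b.ext := rfl

section Aux

variable (P : List2 X → X)

lemma P_sing (hP : ∀ a : List2 X, P a ∈ a.ext) (x : X) : P (List2.Sing2 x) = x := by
  simpa [List2.ext] using hP (List2.Sing2 x)

lemma sind_congr
    (hS : ∀ x y : X,
      (∀ a b : List2 X, P a = x → P b = y → P (List2.Cat a b) = x) ∨
      (∀ a b : List2 X, P a = x → P b = y → P (List2.Cat a b) = y))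
    {a b a' b' : List2 X} {x : X}
    (h : P (List2.Cat a b) = x) (h1 : P a' = P a) (h2 : P b' = P b) :
    P (List2.Cat a' b') = x := by
  rcases hS (P a) (P b) with hd | hd
  · rw [hd a' b' h1 h2, ← hd a b rfl rfl, h]
  · rw [hd a' b' h1 h2, ← hd a b rfl rfl, h]

set_option maxHeartbeats 1000000 in
lemma toPair (hP : ∀ a : List2 X, P a ∈ a.ext)
    (hS : ∀ x y : X,
      (∀ a b : List2 X, P a = x → P b = y → P (List2.Cat a b) = x) ∨
      (∀ a b : List2 X, P a = x → P b = y → P (List2.Cat a b) = y))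
    (hT1 : ∀ (a₁ a₂ : List2 X) (x y : X),
      P (List2.Cat a₁ a₂) = x → P a₁ = y → y ≠ x →
        ∃ b : List2 X, b.ext = (a₁.ext \ {y}) ∪ {x} ∧ P (List2.Cat b a₂) = x)
    (hT2 : ∀ (a₁ a₂ : List2 X) (x y : X),
      P (List2.Cat a₁ a₂) = x → P a₂ = y → y ≠ x →
        ∃ b : List2 X, b.ext = (a₂.ext \ {y}) ∪ {x} ∧ P (List2.Cat a₁ b) = x)
    (x z : X) (hzx : z ≠ x) :
    ∀ n : ℕ, ∀ a : List2 X, (a.ext \ {x}).card ≤ n → P a = x → z ∈ a.ext →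
      ∃ c : List2 X, c.ext = {x, z} ∧ P c = x := by
  intro n
  induction n with
  | zero =>
    intro a hcard hPa hz
    exfalso
    have hmem : z ∈ a.ext \ {x} := by simp [hz, hzx]
    have := Finset.card_pos.mpr ⟨z, hmem⟩
    omega
  | succ n ihn =>
    intro a
    induction a with
    | Sing2 w =>
      intro hcard hPa hz
      simp at hz
      subst hz
      exact absurd ((P_sing P hP z) ▸ hPa) (by simpa using hzx)
    | Cat a1 a2 ih1 ih2 =>
      intro hcard hPa hz
      have hsub1 : a1.ext ⊆ (List2.Cat a1 a2).ext := by
        simp [List2.ext, Finset.subset_union_left]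
      have hsub2 : a2.ext ⊆ (List2.Cat a1 a2).ext := by
        simp [List2.ext, Finset.subset_union_right]
      have hcard1 : (a1.ext \ {x}).card ≤ n + 1 :=
        le_trans (Finset.card_le_card (Finset.sdiff_subset_sdiff hsub1 (le_refl _))) hcard
      have hcard2 : (a2.ext \ {x}).card ≤ n + 1 :=
        le_trans (Finset.card_le_card (Finset.sdiff_subset_sdiff hsub2 (le_refl _))) hcard
      have hx12 : x = P a1 ∨ x = P a2 := by
        rcases hS (P a1) (P a2) with hd | hd
        · left; rw [← hPa, hd a1 a2 rfl rfl]
        · right; rw [← hPa, hd a1 a2 rfl rfl]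
      by_cases h1 : P a1 = x
      · by_cases hz1 : z ∈ a1.ext
        · exact ih1 hcard1 h1 hz1
        · have hz2 : z ∈ a2.ext := by
            simp at hz; tauto
          by_cases h2 : P a2 = x
          · exact ih2 hcard2 h2 hz2
          · by_cases hzv : z = P a2
            · have hext : (List2.Cat (List2.Sing2 x) (List2.Sing2 z)).ext = {x, z} := by
                simp
              have hPc : P (List2.Cat (List2.Sing2 x) (List2.Sing2 z)) = x :=
                sind_congr P hS hPa (by rw [P_sing P hP, h1]) (by rw [P_sing P hP, hzv])
              exact ⟨_, hext, hPc⟩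
            · have hA : P (List2.Cat (List2.Sing2 x) a2) = x :=
                sind_congr P hS hPa (by rw [P_sing P hP, h1]) rfl
              obtain ⟨b, hbext, hbP⟩ := hT2 (List2.Sing2 x) a2 x (P a2) hA rfl h2
              have htext : (List2.Cat (List2.Sing2 x) b).ext = insert x (a2.ext \ {P a2}) := by
                simp [hbext]
              refine ihn (List2.Cat (List2.Sing2 x) b) ?_ hbP ?_
              · have h1' : (List2.Cat (List2.Sing2 x) b).ext \ {x} = (a2.ext \ {x}) \ {P a2} := by
                  rw [htext]; ext w; simp; tauto
                have hlt : ((a2.ext \ {x}) \ {P a2}).card < (a2.ext \ {x}).card := by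
                  apply Finset.card_lt_card
                  constructor
                  · exact Finset.sdiff_subset
                  · intro hss
                    have : P a2 ∈ (a2.ext \ {x}) \ {P a2} := hss (by simp [hP a2, h2])
                    simp at this
                rw [h1']; omega
              · rw [htext]; simp [hz2, hzv]
      · have h2 : P a2 = x := by
          rcases hx12 with h | h
          · exact absurd h.symm h1
          · exact h.symm
        by_cases hz2 : z ∈ a2.ext
        · exact ih2 hcard2 h2 hz2
        · have hz1 : z ∈ a1.ext := by
            simp at hz; tauto
          by_cases hzu : z = P a1
          · have hext : (List2.Cat (List2.Sing2 z) (List2.Sing2 x)).ext = {x, z} := by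
              simp; ext w; simp; tauto
            have hPc : P (List2.Cat (List2.Sing2 z) (List2.Sing2 x)) = x :=
              sind_congr P hS hPa (by rw [P_sing P hP, hzu]) (by rw [P_sing P hP, h2])
            exact ⟨_, hext, hPc⟩
          · have hA : P (List2.Cat a1 (List2.Sing2 x)) = x :=
              sind_congr P hS hPa rfl (by rw [P_sing P hP, h2])
            obtain ⟨b, hbext, hbP⟩ := hT1 a1 (List2.Sing2 x) x (P a1) hA rfl h1
            have htext : (List2.Cat b (List2.Sing2 x)).ext = insert x (a1.ext \ {P a1}) := by
              simp [hbext]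
            refine ihn (List2.Cat b (List2.Sing2 x)) ?_ hbP ?_
            · have h1' : (List2.Cat b (List2.Sing2 x)).ext \ {x} = (a1.ext \ {x}) \ {P a1} := by
                rw [htext]; ext w; simp; tauto
              have hlt : ((a1.ext \ {x}) \ {P a1}).card < (a1.ext \ {x}).card := by
                apply Finset.card_lt_card
                constructor
                · exact Finset.sdiff_subset
                · intro hss
                  have : P a1 ∈ (a1.ext \ {x}) \ {P a1} := hss (by simp [hP a1, h1])
                  simp at this
              rw [h1']; omega
            · rw [htext]; simp [hz1, hzu]



lemma pairCases (hP : ∀ a : List2 X, P a ∈ a.ext)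
    (hS : ∀ x y : X,
      (∀ a b : List2 X, P a = x → P b = y → P (List2.Cat a b) = x) ∨
      (∀ a b : List2 X, P a = x → P b = y → P (List2.Cat a b) = y))
    (x y : X) (hxy : x ≠ y) :
    ∀ e : List2 X, e.ext = {x, y} → P e = x →
      (∀ a b : List2 X, P a = x → P b = y → P (List2.Cat a b) = x) ∨
      (∀ a b : List2 X, P a = y → P b = x → P (List2.Cat a b) = x) := by
  intro e
  induction e with
  | Sing2 w =>
    intro he hpe
    exfalso
    have hx : x ∈ ({w} : Finset X) := by rw [List2.ext_sing] at he; rw [he]; simp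
    have hy : y ∈ ({w} : Finset X) := by rw [List2.ext_sing] at he; rw [he]; simp
    simp at hx hy
    exact hxy (hx.trans hy.symm)
  | Cat e1 e2 ih1 ih2 =>
    intro he hpe
    have hsub1 : e1.ext ⊆ {x, y} := by rw [← he]; simp [Finset.subset_union_left]
    have hsub2 : e2.ext ⊆ {x, y} := by rw [← he]; simp [Finset.subset_union_right]
    have h1m : P e1 = x ∨ P e1 = y := by have := hsub1 (hP e1); simpa using this
    have h2m : P e2 = x ∨ P e2 = y := by have := hsub2 (hP e2); simpa using this
    rcases h1m with h1 | h1 <;> rcases h2m with h2 | h2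
    · -- both x : recurse into whichever side contains y
      have hy : y ∈ e1.ext ∨ y ∈ e2.ext := by
        have : y ∈ (List2.Cat e1 e2).ext := by rw [he]; simp
        simpa using this
      rcases hy with hy | hy
      · have he1 : e1.ext = {x, y} := by
          apply Finset.Subset.antisymm hsub1
          intro w hw
          simp at hw
          rcases hw with h | h
          · subst h; exact h1 ▸ hP e1
          · subst h; exact hy
        exact ih1 he1 h1
      · have he2 : e2.ext = {x, y} := by
          apply Finset.Subset.antisymm hsub2
          intro w hw
          simp at hw
          rcases hw with h | h
          · subst h; exact h2 ▸ hP e2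
          · subst h; exact hy
        exact ih2 he2 h2
    · rcases hS x y with hd | hd
      · exact Or.inl hd
      · exact absurd (hpe.symm.trans (hd e1 e2 h1 h2)) hxy
    · rcases hS y x with hd | hd
      · exact absurd (hpe.symm.trans (hd e1 e2 h1 h2)) hxy
      · exact Or.inr hd
    · rcases hS y y with hd | hd
      · exact absurd (hpe.symm.trans (hd e1 e2 h1 h2)) hxy
      · exact absurd (hpe.symm.trans (hd e1 e2 h1 h2)) hxy

lemma P_cat_both (hS : ∀ x y : X,
      (∀ a b : List2 X, P a = x → P b = y → P (List2.Cat a b) = x) ∨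
      (∀ a b : List2 X, P a = x → P b = y → P (List2.Cat a b) = y))
    {x : X} {a b : List2 X} (ha : P a = x) (hb : P b = x) :
    P (List2.Cat a b) = x := by
  rcases hS x x with hd | hd
  · exact hd a b ha hb
  · exact hd a b ha hb

lemma buildList (hP : ∀ a : List2 X, P a ∈ a.ext)
    (hS : ∀ x y : X,
      (∀ a b : List2 X, P a = x → P b = y → P (List2.Cat a b) = x) ∨
      (∀ a b : List2 X, P a = x → P b = y → P (List2.Cat a b) = y))
    (x : X) :
    ∀ A : Finset X, (∀ y ∈ A, ∃ c : List2 X, c.ext = {x, y} ∧ P c = x) →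
      ∃ a : List2 X, a.ext = A ∪ {x} ∧ P a = x := by
  intro A
  induction A using Finset.induction_on with
  | empty =>
    intro _
    exact ⟨List2.Sing2 x, by simp, P_sing P hP x⟩
  | @insert v A hv ih =>
    intro hA
    obtain ⟨c, hc, hcP⟩ := hA v (Finset.mem_insert_self v A)
    obtain ⟨t, ht, htP⟩ := ih (fun y hy => hA y (Finset.mem_insert_of_mem hy))
    refine ⟨List2.Cat t c, ?_, P_cat_both P hS htP hcP⟩
    rw [List2.ext_cat, ht, hc]
    ext w; simp; tauto

end Aux


set_option maxHeartbeats 1000000 in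
/-- For a decision procedure on `List2 X` that is strongly inductive
and satisfies T-independence of irrelevant alternatives, the choice correspondence
`C_P` is rationalizable by a complete and transitive relation. -/
theorem stmt_19 {X : Type} [DecidableEq X] (P : List2 X → X)
    (hP : ∀ a : List2 X, P a ∈ a.ext)
    (hSIND : ∀ x y : X,
      (∀ a b : List2 X, P a = x → P b = y → P (List2.Cat a b) = x) ∨
      (∀ a b : List2 X, P a = x → P b = y → P (List2.Cat a b) = y))
    (hTIIA₁ : ∀ (a₁ a₂ : List2 X) (x y : X),
      P (List2.Cat a₁ a₂) = x → P a₁ = y → y ≠ x →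
        ∃ b : List2 X, b.ext = (a₁.ext \ {y}) ∪ {x} ∧ P (List2.Cat b a₂) = x)
    (hTIIA₂ : ∀ (a₁ a₂ : List2 X) (x y : X),
      P (List2.Cat a₁ a₂) = x → P a₂ = y → y ≠ x →
        ∃ b : List2 X, b.ext = (a₂.ext \ {y}) ∪ {x} ∧ P (List2.Cat a₁ b) = x) :
    ∃ R : X → X → Prop, (∀ x y : X, R x y ∨ R y x) ∧ Transitive R ∧
      ∀ A : Finset X, A.Nonempty →
        {x : X | ∃ a : List2 X, a.ext = A ∧ P a = x} =
          {x : X | x ∈ A ∧ ∀ y ∈ A, R x y} := by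
  set R : X → X → Prop := fun u v => ∃ c : List2 X, c.ext = {u, v} ∧ P c = u with hR
  have hrefl : ∀ u : X, R u u := fun u => ⟨List2.Sing2 u, by simp, P_sing P hP u⟩
  refine ⟨R, ?_, ?_, ?_⟩
  · -- completeness
    intro u v
    by_cases huv : u = v
    · subst huv; exact Or.inl (hrefl u)
    · have hm : P (List2.Cat (List2.Sing2 u) (List2.Sing2 v)) ∈ ({u, v} : Finset X) := by
        have := hP (List2.Cat (List2.Sing2 u) (List2.Sing2 v))
        simpa using this
      simp at hm
      rcases hm with h | h
      · exact Or.inl ⟨_, by rw [List2.ext_cat]; ext t; simp, h⟩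
      · exact Or.inr ⟨_, by rw [List2.ext_cat]; ext w; simp; tauto, h⟩
  · -- transitivity
    intro u v w huv hvw
    by_cases huw : u = w
    · subst huw; exact hrefl u
    by_cases huv' : u = v
    · subst huv'; exact hvw
    by_cases hvw' : v = w
    · subst hvw'; exact huv
    obtain ⟨c1, hc1, hc1P⟩ := huv
    obtain ⟨c2, hc2, hc2P⟩ := hvw
    have pc1 := pairCases P hP hSIND u v huv' c1 hc1 hc1P
    have pc2 := pairCases P hP hSIND v w hvw' c2 hc2 hc2P
    have key : ∃ t : List2 X, P t = u ∧ w ∈ t.ext := by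
      rcases pc1 with L1 | R1 <;> rcases pc2 with L2 | R2
      · refine ⟨List2.Cat (List2.Sing2 u) (List2.Cat (List2.Sing2 v) (List2.Sing2 w)), ?_, by simp⟩
        exact L1 _ _ (P_sing P hP u) (L2 _ _ (P_sing P hP v) (P_sing P hP w))
      · refine ⟨List2.Cat (List2.Sing2 u) (List2.Cat (List2.Sing2 w) (List2.Sing2 v)), ?_, by simp⟩
        exact L1 _ _ (P_sing P hP u) (R2 _ _ (P_sing P hP w) (P_sing P hP v))
      · refine ⟨List2.Cat (List2.Cat (List2.Sing2 v) (List2.Sing2 w)) (List2.Sing2 u), ?_, by simp⟩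
        exact R1 _ _ (L2 _ _ (P_sing P hP v) (P_sing P hP w)) (P_sing P hP u)
      · refine ⟨List2.Cat (List2.Cat (List2.Sing2 w) (List2.Sing2 v)) (List2.Sing2 u), ?_, by simp⟩
        exact R1 _ _ (R2 _ _ (P_sing P hP w) (P_sing P hP v)) (P_sing P hP u)
    obtain ⟨t, htP, hwt⟩ := key
    exact toPair P hP hSIND hTIIA₁ hTIIA₂ u w (fun h => huw h.symm)
      (t.ext \ {u}).card t le_rfl htP hwt
  · -- characterization
    intro A hA
    ext x
    simp only [Set.mem_setOf_eq]
    constructor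
    · rintro ⟨a, ha, hxa⟩
      have hxA : x ∈ A := ha ▸ (hxa ▸ hP a)
      refine ⟨hxA, fun y hy => ?_⟩
      by_cases hyx : y = x
      · subst hyx; exact hrefl y
      · exact toPair P hP hSIND hTIIA₁ hTIIA₂ x y hyx
          (a.ext \ {x}).card a le_rfl hxa (ha ▸ hy)
    · rintro ⟨hxA, hall⟩
      obtain ⟨a, ha, haP⟩ := buildList P hP hSIND x A hall
      have hAx : A ∪ {x} = A := Finset.union_eq_left.mpr (by simpa using hxA)
      exact ⟨a, by rw [ha, hAx], haP⟩
end
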